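/- arXiv:2006.08580 — 5 statements merged into one kernel-verified Lean document; each statement's English description precedes it below -/
import Mathlib

section
/- Let B ∈ ℝ^{dr×dr} be the block-diagonal matrix whose l-th d×d diagonal block equals (1/2)‖u_l⋆‖₂⁴ I_d + ‖u_l⋆‖₂² u_l⋆ (u_l⋆)ᵀ, for 1 ≤ l ≤ r. If U⋆ is μ-incoherent, then there is a universal constant C > 0 such that, in the Loewner order, Σ_{1≤i≤j≤k≤d} h_{i,j,k} h_{i,j,k}ᵀ ⪯ B + C·(r·√(μ/d) + μr/d)·(max_{1≤l≤r} ‖u_l⋆‖₂⁴)·I_{dr}. -/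
noncomputable section

open MeasureTheory ProbabilityTheory Matrix

namespace TC

/-- Index triples for a `d × d × d` tensor. -/
abbrev Idx (d : ℕ) := Fin d × Fin d × Fin d

/-- Sort a triple of indices into nondecreasing order `(min, median, max)`. -/
def sort3 {d : ℕ} (t : Idx d) : Idx d :=
  (min t.1 (min t.2.1 t.2.2),
    max (min t.1 t.2.1) (min (max t.1 t.2.1) t.2.2),
    max t.1 (max t.2.1 t.2.2))

/-- A symmetric tensor determined by its values on sorted triples. -/
def symEntry {d : ℕ} {α : Type*} (e : Idx d → α) (t : Idx d) : α := e (sort3 t)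

/-- The CP tensor `∑_l u_l ⊗ u_l ⊗ u_l` built from the factor matrix `W`
(the `l`-th column of `W` is the factor `u_l`). -/
def cpTensor {d r : ℕ} (W : Matrix (Fin d) (Fin r) ℝ) (t : Idx d) : ℝ :=
  ∑ l : Fin r, W t.1 l * W t.2.1 l * W t.2.2 l

/-- Euclidean norm of a vector. -/
def norm2 {n : Type*} [Fintype n] (u : n → ℝ) : ℝ := Real.sqrt (∑ i, u i ^ 2)

/-- Sup-norm of a vector. -/
def normInf {n : Type*} [Fintype n] (u : n → ℝ) : ℝ := ⨆ i, |u i|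

/-- The `l`-th column of a factor matrix, i.e. the factor `u_l`. -/
def colU {d r : ℕ} (U : Matrix (Fin d) (Fin r) ℝ) (l : Fin r) : Fin d → ℝ := fun i => U i l

/-- `λ⋆_max = max_l ‖u_l⋆‖₂³`. -/
def lamMax {d r : ℕ} (U : Matrix (Fin d) (Fin r) ℝ) : ℝ := ⨆ l : Fin r, norm2 (colU U l) ^ 3

/-- `λ⋆_min = min_l ‖u_l⋆‖₂³`. -/
def lamMin {d r : ℕ} (U : Matrix (Fin d) (Fin r) ℝ) : ℝ := ⨅ l : Fin r, norm2 (colU U l) ^ 3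

/-- `μ`-incoherence of the factor matrix `U`. -/
def Incoherent {d r : ℕ} (μ : ℝ) (U : Matrix (Fin d) (Fin r) ℝ) : Prop :=
  (⨆ t : Idx d, |cpTensor U t|) ≤
      Real.sqrt (μ / (d : ℝ) ^ 3) * Real.sqrt (∑ t : Idx d, cpTensor U t ^ 2) ∧
  (∀ l, normInf (colU U l) ≤ Real.sqrt (μ / (d : ℝ)) * norm2 (colU U l)) ∧
  ∀ l j, l ≠ j →
    |∑ i, U i l * U i j| ≤ Real.sqrt (μ / (d : ℝ)) * (norm2 (colU U l) * norm2 (colU U j))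

/-- The lifted `d² × r` matrix `Ũ`, with `((i,j), l)` entry `u_{l,i} u_{l,j}`. -/
def lift {d r : ℕ} (U : Matrix (Fin d) (Fin r) ℝ) : Matrix (Fin d × Fin d) (Fin r) ℝ :=
  Matrix.of fun ij l => U ij.1 l * U ij.2 l

/-- `Ũᵀ Ũ`. -/
def gram {d r : ℕ} (U : Matrix (Fin d) (Fin r) ℝ) : Matrix (Fin r) (Fin r) ℝ :=
  (lift U)ᵀ * lift U

/-- The diagonal matrix `D_k⋆` of noise variances in the `k`-th slice. -/
def Dstar {d : ℕ} (σv : Fin d → Fin d → Fin d → ℝ) (k : Fin d) :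
    Matrix (Fin d × Fin d) (Fin d × Fin d) ℝ :=
  Matrix.diagonal fun ij => σv ij.1 ij.2 k ^ 2

/-- The covariance matrix `Σ_k⋆ = (2/p) (ŨᵀŨ)⁻¹ Ũᵀ D_k⋆ Ũ (ŨᵀŨ)⁻¹`. -/
def SigmaStar {d r : ℕ} (U : Matrix (Fin d) (Fin r) ℝ) (p : ℝ)
    (σv : Fin d → Fin d → Fin d → ℝ) (k : Fin d) : Matrix (Fin r) (Fin r) ℝ :=
  (2 / p) • ((gram U)⁻¹ * (lift U)ᵀ * Dstar σv k * lift U * (gram U)⁻¹)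

/-- Quadratic form `Ũ_{(i,j),:} Σ_m⋆ (Ũ_{(i,j),:})ᵀ`. -/
def qf {d r : ℕ} (U : Matrix (Fin d) (Fin r) ℝ) (p : ℝ)
    (σv : Fin d → Fin d → Fin d → ℝ) (m i j : Fin d) : ℝ :=
  ∑ a : Fin r, ∑ b : Fin r, lift U (i, j) a * SigmaStar U p σv m a b * lift U (i, j) b

/-- The variance parameters `v⋆_{i,j,k}` (symmetric in the indices). -/
def vstar {d r : ℕ} (U : Matrix (Fin d) (Fin r) ℝ) (p : ℝ)
    (σv : Fin d → Fin d → Fin d → ℝ) (i j k : Fin d) : ℝ :=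
  if i = j ∧ j = k then 9 * qf U p σv i i i
  else if i = j then 4 * qf U p σv i i k + qf U p σv k i i
  else if i = k then 4 * qf U p σv i i j + qf U p σv j i i
  else if j = k then 4 * qf U p σv j j i + qf U p σv i j j
  else qf U p σv i j k + qf U p σv j i k + qf U p σv k i j

/-- Bernoulli measure on `Bool` with success probability `p` (clipped at 1). -/
def bern (p : ℝ) : Measure Bool :=
  (PMF.bernoulli (min (Real.toNNReal p) 1) (min_le_right _ _)).toMeasure

/-- The random symmetric sampling pattern: independent Bernoulli(p) indicators for the
sorted triples, symmetrized through `symEntry`/`sort3`. -/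
def sampleMeasure (d : ℕ) (p : ℝ) : Measure (Idx d → Bool) :=
  Measure.pi fun _ => bern p

/-- i.i.d. Gaussian noise with variance `v` on the sorted triples, symmetrized through
`symEntry`/`sort3`. -/
def noiseMeasure (d : ℕ) (v : NNReal) : Measure (Idx d → ℝ) :=
  Measure.pi fun _ => gaussianReal 0 v

/-- The indicator `χ_{i,j,k}` of the (symmetrized) sampling set. -/
def chi {d : ℕ} (S : Idx d → Bool) (t : Idx d) : ℝ := if symEntry S t then 1 else 0

/-- The observed (masked) tensor `𝒫_Ω(W♯ + E)` for ground truth `W` and noise `e`. -/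
def obs {d r : ℕ} (S : Idx d → Bool) (W : Matrix (Fin d) (Fin r) ℝ) (e : Idx d → ℝ) :
    Idx d → ℝ :=
  fun t => if symEntry S t then cpTensor W t + symEntry e t else 0

/-- The sorted triples `i ≤ j ≤ k`. -/
def sortedTriples (d : ℕ) : Finset (Idx d) :=
  Finset.univ.filter fun t => t.1 ≤ t.2.1 ∧ t.2.1 ≤ t.2.2

/-- The vector `h_{i,j,k} ∈ ℝ^{dr}` with `(l, s)` entry
`u⋆_{l,j}u⋆_{l,k}·1{i=s} + u⋆_{l,i}u⋆_{l,k}·1{j=s} + u⋆_{l,i}u⋆_{l,j}·1{k=s}`. -/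
def hvec {d r : ℕ} (U : Matrix (Fin d) (Fin r) ℝ) (t : Idx d) : Fin r × Fin d → ℝ :=
  fun ls =>
    (if t.1 = ls.2 then U t.2.1 ls.1 * U t.2.2 ls.1 else 0) +
      (if t.2.1 = ls.2 then U t.1 ls.1 * U t.2.2 ls.1 else 0) +
      (if t.2.2 = ls.2 then U t.1 ls.1 * U t.2.1 ls.1 else 0)

/-- Spectral norm of a square matrix: `sup_{‖x‖₂ ≤ 1} ‖A x‖₂`. -/
def specNorm {n : Type*} [Fintype n] (A : Matrix n n ℝ) : ℝ :=
  ⨆ x : { x : n → ℝ // ∑ i, x i ^ 2 ≤ 1 }, Real.sqrt (∑ i, A.mulVec x.1 i ^ 2)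

/-- `V⋆ = Ũ (ŨᵀŨ)⁻¹`. -/
def Vmat {d r : ℕ} (U : Matrix (Fin d) (Fin r) ℝ) : Matrix (Fin d × Fin d) (Fin r) ℝ :=
  lift U * (gram U)⁻¹

/-- `P⋆ = Ũ (ŨᵀŨ)⁻¹ Ũᵀ`. -/
def Pmat {d r : ℕ} (U : Matrix (Fin d) (Fin r) ℝ) :
    Matrix (Fin d × Fin d) (Fin d × Fin d) ℝ :=
  lift U * (gram U)⁻¹ * (lift U)ᵀ

/-- The random matrix `S_m⋆` built from the sampling pattern `S`. -/
def SstarMat {d r : ℕ} (U : Matrix (Fin d) (Fin r) ℝ) (p : ℝ)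
    (σv : Fin d → Fin d → Fin d → ℝ) (S : Idx d → Bool) (m : Fin d) :
    Matrix (Fin r) (Fin r) ℝ :=
  Matrix.of fun a b =>
    2 / p ^ 2 * ∑ i : Fin d, ∑ j : Fin d,
      σv i j m ^ 2 * chi S (i, j, m) * (∑ l, (gram U)⁻¹ a l * lift U (i, j) l) *
        (∑ l, (gram U)⁻¹ b l * lift U (i, j) l)

/-- The row vector `z_{i,j,k} = p⁻¹ E_{i,j,k} χ_{i,j,k} Ũ_{(i,j),:} (ŨᵀŨ)⁻¹`, as a function of a
joint sampling/noise outcome `ω`. -/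
def zEntry {d r : ℕ} (U : Matrix (Fin d) (Fin r) ℝ) (p : ℝ)
    (ω : (Idx d → Bool) × (Idx d → ℝ)) (i j k : Fin d) : Fin r → ℝ :=
  fun l => p⁻¹ * symEntry ω.2 (i, j, k) * chi ω.1 (i, j, k) *
    ∑ a, lift U (i, j) a * (gram U)⁻¹ a l

/-- The random matrix `X` with rows `X_{m,:} = ∑_{i,j} z_{i,j,m}`. -/
def Xmat {d r : ℕ} (U : Matrix (Fin d) (Fin r) ℝ) (p : ℝ)
    (ω : (Idx d → Bool) × (Idx d → ℝ)) : Fin d → Fin r → ℝ :=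
  fun m l => ∑ i : Fin d, ∑ j : Fin d, zEntry U p ω i j m l

/-- The random matrix `Z` with rows `Z_{k,:} = √2 ∑_i z_{i,i,k} + 2 ∑_{i<j} z_{i,j,k}`. -/
def Zmat {d r : ℕ} (U : Matrix (Fin d) (Fin r) ℝ) (p : ℝ)
    (ω : (Idx d → Bool) × (Idx d → ℝ)) : Fin d → Fin r → ℝ :=
  fun k l =>
    Real.sqrt 2 * ∑ i : Fin d, zEntry U p ω i i k l +
      2 * ∑ i : Fin d, ∑ j : Fin d, if i < j then zEntry U p ω i j k l else 0

/-- Standard normal CDF `Φ`. -/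
def stdGaussCDF (τ : ℝ) : ℝ := (gaussianReal 0 1 (Set.Iic τ)).toReal

/-- Update the `(s, l)` entry of a matrix to the value `x`. -/
def updEntry {d r : ℕ} (U : Matrix (Fin d) (Fin r) ℝ) (s : Fin d) (l : Fin r) (x : ℝ) :
    Matrix (Fin d) (Fin r) ℝ :=
  Matrix.of fun i l' => if i = s ∧ l' = l then x else U i l'

/-- The score vector `g = σ⁻² ∑_{i≤j≤k} χ_{ijk} E_{ijk} h_{ijk}`. -/
def gvec {d r : ℕ} (U : Matrix (Fin d) (Fin r) ℝ) (σ : ℝ) (S : Finset (Idx d))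
    (e : Idx d → ℝ) : Fin r × Fin d → ℝ :=
  fun ls => (σ ^ 2)⁻¹ *
    ∑ t ∈ sortedTriples d, (if t ∈ S then (1 : ℝ) else 0) * symEntry e t * hvec U t ls

/-- The covariance matrix `S_l⋆` of the `l`-th column of the Gaussian part of the error,
for product-form noise levels `σ_{ijk} = s_i s_j s_k`. -/
def SlMat {d r : ℕ} (U : Matrix (Fin d) (Fin r) ℝ) (p : ℝ) (s : Fin d → ℝ) (l : Fin r) :
    Matrix (Fin d) (Fin d) ℝ :=
  Matrix.of fun i j =>
    if i = j then
      2 * ∑ k₁ : Fin d, ∑ k₂ : Fin d, p⁻¹ * (s i * s k₁ * s k₂) ^ 2 * Vmat U (k₁, k₂) l ^ 2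
    else
      4 * (∑ k : Fin d, p⁻¹ * (s i * s j * s k) ^ 2 * Vmat U (i, k) l * Vmat U (j, k) l) -
        (4 - 2 * Real.sqrt 2) * p⁻¹ * (s i * s i * s j) ^ 2 * Vmat U (i, i) l * Vmat U (i, j) l -
        (4 - 2 * Real.sqrt 2) * p⁻¹ * (s i * s j * s j) ^ 2 * Vmat U (j, j) l * Vmat U (i, j) l

/-- Spectral norm of an order-3 tensor: `sup_{‖x‖=‖y‖=‖z‖=1} ⟨T, x⊗y⊗z⟩`. -/
def tSpec {d : ℕ} (T : Idx d → ℝ) : ℝ :=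
  ⨆ v : { v : (Fin d → ℝ) × (Fin d → ℝ) × (Fin d → ℝ) //
      norm2 v.1 = 1 ∧ norm2 v.2.1 = 1 ∧ norm2 v.2.2 = 1 },
    ∑ t : Idx d, T t * v.1.1 t.1 * v.1.2.1 t.2.1 * v.1.2.2 t.2.2

section Statement4Aux

variable {d r : ℕ}

def Sf (u x : Fin r → Fin d → ℝ) (i j k : Fin d) : ℝ :=
  ∑ l, (u l j * u l k * x l i + u l i * u l k * x l j + u l i * u l j * x l k)
lemma Sf_swap12 (u x : Fin r → Fin d → ℝ) (i j k : Fin d) : Sf u x j i k = Sf u x i j k :=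
  Finset.sum_congr rfl fun l _ => by ring
lemma Sf_swap23 (u x : Fin r → Fin d → ℝ) (i j k : Fin d) : Sf u x i k j = Sf u x i j k :=
  Finset.sum_congr rfl fun l _ => by ring
lemma Sf_rot (u x : Fin r → Fin d → ℝ) (i j k : Fin d) : Sf u x k i j = Sf u x i j k :=
  Finset.sum_congr rfl fun l _ => by ring
lemma Sf_rot' (u x : Fin r → Fin d → ℝ) (i j k : Fin d) : Sf u x j k i = Sf u x i j k :=
  Finset.sum_congr rfl fun l _ => by ring
lemma Sf_rev (u x : Fin r → Fin d → ℝ) (i j k : Fin d) : Sf u x k j i = Sf u x i j k :=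
  Finset.sum_congr rfl fun l _ => by ring
lemma sum_idx (g : Idx d → ℝ) : ∑ t : Idx d, g t = ∑ i, ∑ j, ∑ k, g (i, j, k) := by
  rw [Fintype.sum_prod_type]
  exact Finset.sum_congr rfl fun i _ => Fintype.sum_prod_type _
lemma sA (g : Fin d → Fin d → Fin d → ℝ) :
    ∑ i, ∑ j, ∑ k, g i j k = ∑ i, ∑ j, ∑ k, g j i k := Finset.sum_comm
lemma sB (g : Fin d → Fin d → Fin d → ℝ) :
    ∑ i, ∑ j, ∑ k, g i j k = ∑ i, ∑ j, ∑ k, g i k j :=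
  Finset.sum_congr rfl fun _ _ => Finset.sum_comm
lemma s231 (g : Fin d → Fin d → Fin d → ℝ) :
    ∑ i, ∑ j, ∑ k, g i j k = ∑ i, ∑ j, ∑ k, g j k i :=
  (sB g).trans (sA fun a b c => g a c b)
lemma s312 (g : Fin d → Fin d → Fin d → ℝ) :
    ∑ i, ∑ j, ∑ k, g i j k = ∑ i, ∑ j, ∑ k, g k i j :=
  (sA g).trans (sB fun a b c => g b a c)
lemma s321 (g : Fin d → Fin d → Fin d → ℝ) :
    ∑ i, ∑ j, ∑ k, g i j k = ∑ i, ∑ j, ∑ k, g k j i :=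
  (sA g).trans (((sB fun a b c => g b a c)).trans (sA fun a b c => g c a b))
lemma ind6 (i j k : Fin d) (F : ℝ) (hF : 0 ≤ F) :
    (if i < j ∧ j < k then F else 0) + (if i < k ∧ k < j then F else 0)
      + (if j < i ∧ i < k then F else 0) + (if j < k ∧ k < i then F else 0)
      + (if k < i ∧ i < j then F else 0) + (if k < j ∧ j < i then F else 0)
      ≤ F := by
  simp only [Fin.lt_def]
  split_ifs <;> (try linarith) <;> omega
lemma split_sorted (i j k : Fin d) (F : ℝ) (hF : 0 ≤ F) :
    (if i ≤ j ∧ j ≤ k then F else 0) ≤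
      (if i < j ∧ j < k then F else 0) + ((if i = j then F else 0) + (if j = k then F else 0)) := by
  simp only [Fin.lt_def, Fin.le_def, Fin.ext_iff]
  split_ifs <;> (try linarith) <;> omega

lemma counting (u x : Fin r → Fin d → ℝ) :
    ∑ t ∈ sortedTriples d, Sf u x t.1 t.2.1 t.2.2 ^ 2 ≤
      (1/6) * (∑ i, ∑ j, ∑ k, Sf u x i j k ^ 2) + 2 * ∑ a, ∑ b, Sf u x a a b ^ 2 := by
  have hF0 : ∀ i j k : Fin d, (0:ℝ) ≤ Sf u x i j k ^ 2 := fun _ _ _ => sq_nonneg _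
  have step1 : ∑ t ∈ sortedTriples d, Sf u x t.1 t.2.1 t.2.2 ^ 2
      = ∑ i, ∑ j, ∑ k, if i ≤ j ∧ j ≤ k then Sf u x i j k ^ 2 else 0 := by
    rw [sortedTriples, Finset.sum_filter,
      sum_idx (fun t => if t.1 ≤ t.2.1 ∧ t.2.1 ≤ t.2.2 then Sf u x t.1 t.2.1 t.2.2 ^ 2 else 0)]
  -- the six pattern sums all equal the strict one
  have e2 : (∑ i, ∑ j, ∑ k, if i < k ∧ k < j then Sf u x i j k ^ 2 else 0)
      = ∑ i, ∑ j, ∑ k, if i < j ∧ j < k then Sf u x i j k ^ 2 else 0 := by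
    rw [sB fun i j k => if i < k ∧ k < j then Sf u x i j k ^ 2 else 0]
    exact Finset.sum_congr rfl fun i _ => Finset.sum_congr rfl fun j _ =>
      Finset.sum_congr rfl fun k _ => if_congr Iff.rfl (by rw [Sf_swap23]) rfl
  have e3 : (∑ i, ∑ j, ∑ k, if j < i ∧ i < k then Sf u x i j k ^ 2 else 0)
      = ∑ i, ∑ j, ∑ k, if i < j ∧ j < k then Sf u x i j k ^ 2 else 0 := by
    rw [sA fun i j k => if j < i ∧ i < k then Sf u x i j k ^ 2 else 0]
    exact Finset.sum_congr rfl fun i _ => Finset.sum_congr rfl fun j _ =>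
      Finset.sum_congr rfl fun k _ => if_congr Iff.rfl (by rw [Sf_swap12]) rfl
  have e4 : (∑ i, ∑ j, ∑ k, if j < k ∧ k < i then Sf u x i j k ^ 2 else 0)
      = ∑ i, ∑ j, ∑ k, if i < j ∧ j < k then Sf u x i j k ^ 2 else 0 := by
    rw [s312 fun i j k => if j < k ∧ k < i then Sf u x i j k ^ 2 else 0]
    exact Finset.sum_congr rfl fun i _ => Finset.sum_congr rfl fun j _ =>
      Finset.sum_congr rfl fun k _ => if_congr Iff.rfl (by rw [Sf_rot]) rfl
  have e5 : (∑ i, ∑ j, ∑ k, if k < i ∧ i < j then Sf u x i j k ^ 2 else 0)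
      = ∑ i, ∑ j, ∑ k, if i < j ∧ j < k then Sf u x i j k ^ 2 else 0 := by
    rw [s231 fun i j k => if k < i ∧ i < j then Sf u x i j k ^ 2 else 0]
    exact Finset.sum_congr rfl fun i _ => Finset.sum_congr rfl fun j _ =>
      Finset.sum_congr rfl fun k _ => if_congr Iff.rfl (by rw [Sf_rot']) rfl
  have e6 : (∑ i, ∑ j, ∑ k, if k < j ∧ j < i then Sf u x i j k ^ 2 else 0)
      = ∑ i, ∑ j, ∑ k, if i < j ∧ j < k then Sf u x i j k ^ 2 else 0 := by
    rw [s321 fun i j k => if k < j ∧ j < i then Sf u x i j k ^ 2 else 0]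
    exact Finset.sum_congr rfl fun i _ => Finset.sum_congr rfl fun j _ =>
      Finset.sum_congr rfl fun k _ => if_congr Iff.rfl (by rw [Sf_rev]) rfl
  have hsum : (∑ i, ∑ j, ∑ k, if i < j ∧ j < k then Sf u x i j k ^ 2 else 0)
      + (∑ i, ∑ j, ∑ k, if i < k ∧ k < j then Sf u x i j k ^ 2 else 0)
      + (∑ i, ∑ j, ∑ k, if j < i ∧ i < k then Sf u x i j k ^ 2 else 0)
      + (∑ i, ∑ j, ∑ k, if j < k ∧ k < i then Sf u x i j k ^ 2 else 0)
      + (∑ i, ∑ j, ∑ k, if k < i ∧ i < j then Sf u x i j k ^ 2 else 0)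
      + (∑ i, ∑ j, ∑ k, if k < j ∧ j < i then Sf u x i j k ^ 2 else 0)
      ≤ ∑ i, ∑ j, ∑ k, Sf u x i j k ^ 2 := by
    simp only [← Finset.sum_add_distrib]
    exact Finset.sum_le_sum fun i _ => Finset.sum_le_sum fun j _ =>
      Finset.sum_le_sum fun k _ => ind6 i j k _ (hF0 i j k)
  have hstrict : (∑ i, ∑ j, ∑ k, if i < j ∧ j < k then Sf u x i j k ^ 2 else 0)
      ≤ (1/6) * ∑ i, ∑ j, ∑ k, Sf u x i j k ^ 2 := by
    rw [e2, e3, e4, e5, e6] at hsum; linarith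
  have h1 : (∑ i, ∑ j, ∑ k, if i = j then Sf u x i j k ^ 2 else 0)
      = ∑ a, ∑ b, Sf u x a a b ^ 2 := by
    refine Finset.sum_congr rfl fun i _ => ?_
    have : ∀ j : Fin d, (∑ k, if i = j then Sf u x i j k ^ 2 else 0)
        = if i = j then (∑ k, Sf u x i j k ^ 2) else 0 := by
      intro j; by_cases h : i = j <;> simp [h]
    rw [Finset.sum_congr rfl fun j _ => this j, Finset.sum_ite_eq]
    simp
  have h2 : (∑ i, ∑ j, ∑ k, if j = k then Sf u x i j k ^ 2 else 0)
      = ∑ a, ∑ b, Sf u x a a b ^ 2 := by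
    have : (∑ i, ∑ j, ∑ k, if j = k then Sf u x i j k ^ 2 else 0)
        = ∑ i, ∑ j, Sf u x i j j ^ 2 := by
      refine Finset.sum_congr rfl fun i _ => Finset.sum_congr rfl fun j _ => ?_
      rw [Finset.sum_ite_eq]; simp
    rw [this]
    rw [show (∑ i, ∑ j, Sf u x i j j ^ 2) = ∑ i, ∑ j, Sf u x j j i ^ 2 from
      Finset.sum_congr rfl fun i _ => Finset.sum_congr rfl fun j _ => by rw [Sf_rot u x j j i]]
    exact Finset.sum_comm
  calc ∑ t ∈ sortedTriples d, Sf u x t.1 t.2.1 t.2.2 ^ 2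
      = ∑ i, ∑ j, ∑ k, if i ≤ j ∧ j ≤ k then Sf u x i j k ^ 2 else 0 := step1
    _ ≤ ∑ i, ∑ j, ∑ k, ((if i < j ∧ j < k then Sf u x i j k ^ 2 else 0)
          + ((if i = j then Sf u x i j k ^ 2 else 0) + (if j = k then Sf u x i j k ^ 2 else 0))) :=
        Finset.sum_le_sum fun i _ => Finset.sum_le_sum fun j _ =>
          Finset.sum_le_sum fun k _ => split_sorted i j k _ (hF0 i j k)
    _ = (∑ i, ∑ j, ∑ k, if i < j ∧ j < k then Sf u x i j k ^ 2 else 0)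
          + ((∑ i, ∑ j, ∑ k, if i = j then Sf u x i j k ^ 2 else 0)
            + (∑ i, ∑ j, ∑ k, if j = k then Sf u x i j k ^ 2 else 0)) := by
        simp only [Finset.sum_add_distrib]
    _ ≤ (1/6) * (∑ i, ∑ j, ∑ k, Sf u x i j k ^ 2) + 2 * ∑ a, ∑ b, Sf u x a a b ^ 2 := by
        rw [h1, h2]; linarith
lemma sep (f g h : Fin d → ℝ) :
    ∑ i, ∑ j, ∑ k, f i * g j * h k = (∑ i, f i) * (∑ i, g i) * (∑ i, h i) := by
  rw [Finset.sum_mul_sum, Finset.sum_mul]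
  refine Finset.sum_congr rfl fun i _ => ?_
  rw [Finset.sum_mul]
  refine Finset.sum_congr rfl fun j _ => ?_
  rw [Finset.mul_sum]

lemma push (G : Fin d → Fin r → Fin r → ℝ) :
    ∑ a : Fin d, ∑ l : Fin r, ∑ m : Fin r, G a l m = ∑ l, ∑ m, ∑ a, G a l m := by
  rw [Finset.sum_comm]
  exact Finset.sum_congr rfl fun l _ => Finset.sum_comm

lemma expand (u x : Fin r → Fin d → ℝ) :
    ∑ i, ∑ j, ∑ k, Sf u x i j k ^ 2
      = ∑ l, ∑ m, (3 * (∑ i, u l i * u m i) ^ 2 * (∑ i, x l i * x m i)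
          + 6 * (∑ i, u l i * u m i) * (∑ i, u l i * x m i) * (∑ i, u m i * x l i)) := by
  have step1 : ∑ i, ∑ j, ∑ k, Sf u x i j k ^ 2
      = ∑ l, ∑ m, ∑ i, ∑ j, ∑ k,
          ((u l j * u l k * x l i + u l i * u l k * x l j + u l i * u l j * x l k)
            * (u m j * u m k * x m i + u m i * u m k * x m j + u m i * u m j * x m k)) := by
    have e1 : ∀ i j k : Fin d, Sf u x i j k ^ 2 = ∑ l, ∑ m,
        ((u l j * u l k * x l i + u l i * u l k * x l j + u l i * u l j * x l k)
          * (u m j * u m k * x m i + u m i * u m k * x m j + u m i * u m j * x m k)) := by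
      intro i j k
      rw [pow_two, Sf, Finset.sum_mul_sum]
    rw [Finset.sum_congr rfl fun i _ => Finset.sum_congr rfl fun j _ =>
      Finset.sum_congr rfl fun k _ => e1 i j k]
    -- now push the l,m sums out
    rw [Finset.sum_congr rfl fun i _ => Finset.sum_congr rfl fun j _ => push _]
    rw [Finset.sum_congr rfl fun i _ => push _]
    rw [push _]
  rw [step1]
  refine Finset.sum_congr rfl fun l _ => Finset.sum_congr rfl fun m _ => ?_
  have e9 : ∀ i j k : Fin d,
      ((u l j * u l k * x l i + u l i * u l k * x l j + u l i * u l j * x l k)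
        * (u m j * u m k * x m i + u m i * u m k * x m j + u m i * u m j * x m k))
      = (x l i * x m i) * (u l j * u m j) * (u l k * u m k)
        + (u m i * x l i) * (u l j * x m j) * (u l k * u m k)
        + (u m i * x l i) * (u l j * u m j) * (u l k * x m k)
        + (u l i * x m i) * (u m j * x l j) * (u l k * u m k)
        + (u l i * u m i) * (x l j * x m j) * (u l k * u m k)
        + (u l i * u m i) * (u m j * x l j) * (u l k * x m k)
        + (u l i * x m i) * (u l j * u m j) * (u m k * x l k)
        + (u l i * u m i) * (u l j * x m j) * (u m k * x l k)
        + (u l i * u m i) * (u l j * u m j) * (x l k * x m k) := by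
    intro i j k; ring
  rw [Finset.sum_congr rfl fun i _ => Finset.sum_congr rfl fun j _ =>
    Finset.sum_congr rfl fun k _ => e9 i j k]
  simp only [Finset.sum_add_distrib]
  rw [sep (fun i => x l i * x m i) (fun j => u l j * u m j) (fun k => u l k * u m k),
    sep (fun i => u m i * x l i) (fun j => u l j * x m j) (fun k => u l k * u m k),
    sep (fun i => u m i * x l i) (fun j => u l j * u m j) (fun k => u l k * x m k),
    sep (fun i => u l i * x m i) (fun j => u m j * x l j) (fun k => u l k * u m k),
    sep (fun i => u l i * u m i) (fun j => x l j * x m j) (fun k => u l k * u m k),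
    sep (fun i => u l i * u m i) (fun j => u m j * x l j) (fun k => u l k * x m k),
    sep (fun i => u l i * x m i) (fun j => u l j * u m j) (fun k => u m k * x l k),
    sep (fun i => u l i * u m i) (fun j => u l j * x m j) (fun k => u m k * x l k),
    sep (fun i => u l i * u m i) (fun j => u l j * u m j) (fun k => x l k * x m k)]
  ring
lemma abs_sum_mul_le (f g : Fin d → ℝ) :
    |∑ i, f i * g i| ≤ Real.sqrt (∑ i, f i ^ 2) * Real.sqrt (∑ i, g i ^ 2) := by
  rw [← Real.sqrt_mul (by positivity), ← Real.sqrt_sq_eq_abs]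
  exact Real.sqrt_le_sqrt (Finset.sum_mul_sq_le_sq_mul_sq _ _ _)

lemma sqrt_mul_sqrt_le {a b : ℝ} (ha : 0 ≤ a) (hb : 0 ≤ b) :
    Real.sqrt a * Real.sqrt b ≤ (a + b) / 2 := by
  nlinarith [two_mul_le_add_sq (Real.sqrt a) (Real.sqrt b), Real.sq_sqrt ha, Real.sq_sqrt hb]

lemma pair_bound (s P Xlm C D nl nm Xl Xm lam : ℝ)
    (hs : 0 ≤ s) (hnl : 0 ≤ nl) (hnm : 0 ≤ nm) (hXl : 0 ≤ Xl) (hXm : 0 ≤ Xm)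
    (hlam : nl * nm ≤ lam)
    (hP : |P| ≤ s * (Real.sqrt nl * Real.sqrt nm))
    (hX : |Xlm| ≤ Real.sqrt Xl * Real.sqrt Xm)
    (hC : |C| ≤ Real.sqrt nl * Real.sqrt Xm)
    (hD : |D| ≤ Real.sqrt nm * Real.sqrt Xl) :
    3 * P ^ 2 * Xlm + 6 * P * C * D ≤ (3 * s ^ 2 + 6 * s) * lam * ((Xl + Xm) / 2) := by
  have hpq : Real.sqrt Xl * Real.sqrt Xm ≤ (Xl + Xm) / 2 := sqrt_mul_sqrt_le hXl hXm
  set a := Real.sqrt nl with ha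
  set b := Real.sqrt nm with hb
  set p := Real.sqrt Xl with hp
  set q := Real.sqrt Xm with hq
  have ha0 : 0 ≤ a := Real.sqrt_nonneg _
  have hb0 : 0 ≤ b := Real.sqrt_nonneg _
  have hp0 : 0 ≤ p := Real.sqrt_nonneg _
  have hq0 : 0 ≤ q := Real.sqrt_nonneg _
  have ha2 : a ^ 2 = nl := Real.sq_sqrt hnl
  have hb2 : b ^ 2 = nm := Real.sq_sqrt hnm
  have hpq0 : 0 ≤ p * q := mul_nonneg hp0 hq0
  have hnn : 0 ≤ nl * nm := mul_nonneg hnl hnm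
  have hhalf0 : 0 ≤ (Xl + Xm) / 2 := by positivity
  -- first term
  have hP2 : P ^ 2 ≤ s ^ 2 * (nl * nm) := by
    have h := mul_self_le_mul_self (abs_nonneg P) hP
    have h2 : |P| * |P| = P ^ 2 := by rw [← abs_mul, abs_mul_self]; ring
    have h3 : s * (a * b) * (s * (a * b)) = s ^ 2 * (a ^ 2 * b ^ 2) := by ring
    rw [ha2, hb2] at h3
    linarith
  have A1 : 3 * P ^ 2 * Xlm ≤ 3 * s ^ 2 * (lam * ((Xl + Xm) / 2)) := by
    have e1 : P ^ 2 * Xlm ≤ P ^ 2 * (p * q) := by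
      nlinarith [mul_nonneg (sq_nonneg P) (sub_nonneg.mpr ((le_abs_self Xlm).trans hX))]
    have e2 : P ^ 2 * (p * q) ≤ (s ^ 2 * (nl * nm)) * (p * q) :=
      mul_le_mul_of_nonneg_right hP2 hpq0
    have e3 : (nl * nm) * (p * q) ≤ lam * ((Xl + Xm) / 2) :=
      mul_le_mul hlam hpq hpq0 (hnn.trans hlam)
    have e4 : s ^ 2 * ((nl * nm) * (p * q)) ≤ s ^ 2 * (lam * ((Xl + Xm) / 2)) :=
      mul_le_mul_of_nonneg_left e3 (sq_nonneg s)
    nlinarith [e1, e2, e4]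
  -- second term
  have A2 : 6 * P * C * D ≤ 6 * s * (lam * ((Xl + Xm) / 2)) := by
    have habs : |P * C * D| ≤ (s * (a * b)) * (a * q) * (b * p) := by
      rw [abs_mul, abs_mul]
      exact mul_le_mul (mul_le_mul hP hC (abs_nonneg C)
        (mul_nonneg hs (mul_nonneg ha0 hb0))) hD (abs_nonneg D)
        (mul_nonneg (mul_nonneg hs (mul_nonneg ha0 hb0)) (mul_nonneg ha0 hq0))
    have heq : (s * (a * b)) * (a * q) * (b * p) = s * ((a ^ 2 * b ^ 2) * (p * q)) := by ring
    have heq2 : (s * (a * b)) * (a * q) * (b * p) = s * ((nl * nm) * (p * q)) := by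
      rw [heq, ha2, hb2]
    have e3 : (nl * nm) * (p * q) ≤ lam * ((Xl + Xm) / 2) :=
      mul_le_mul hlam hpq hpq0 (hnn.trans hlam)
    have e4 : s * ((nl * nm) * (p * q)) ≤ s * (lam * ((Xl + Xm) / 2)) :=
      mul_le_mul_of_nonneg_left e3 hs
    have e5 : P * C * D ≤ s * (lam * ((Xl + Xm) / 2)) := by
      calc P * C * D ≤ |P * C * D| := le_abs_self _
        _ ≤ s * ((nl * nm) * (p * q)) := by rw [← heq2]; exact habs
        _ ≤ _ := e4
    linarith
  nlinarith [A1, A2]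
lemma sum_sq_le (lam : ℝ) (n : Fin r → ℝ) (h : ∀ l, n l ^ 2 ≤ lam) :
    ∑ l, n l ^ 2 ≤ (r : ℝ) * lam := by
  calc ∑ l, n l ^ 2 ≤ ∑ _l : Fin r, lam := Finset.sum_le_sum fun l _ => h l
    _ = (r : ℝ) * lam := by rw [Finset.sum_const, Finset.card_univ, Fintype.card_fin,
          nsmul_eq_mul]

lemma corr (u x : Fin r → Fin d → ℝ) (s lam : ℝ) (hs : 0 ≤ s) (hlam0 : 0 ≤ lam)
    (hlam : ∀ l, (∑ i, u l i ^ 2) ^ 2 ≤ lam)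
    (hu2 : ∀ l i, u l i ^ 2 ≤ s ^ 2 * (∑ i', u l i' ^ 2)) :
    ∑ a, ∑ b, Sf u x a a b ^ 2
      ≤ 10 * s ^ 2 * ((r : ℝ) * lam) * (∑ l, ∑ i, x l i ^ 2) := by
  set n : Fin r → ℝ := fun l => ∑ i, u l i ^ 2 with hn
  have hn0 : ∀ l, 0 ≤ n l := fun l => Finset.sum_nonneg fun i _ => sq_nonneg _
  set Y : Fin d → ℝ := fun a => ∑ l, x l a ^ 2 with hY
  have hY0 : ∀ a, 0 ≤ Y a := fun a => Finset.sum_nonneg fun l _ => sq_nonneg _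
  have hTX : ∑ a, Y a = ∑ l, ∑ i, x l i ^ 2 := Finset.sum_comm
  have hTX0 : 0 ≤ ∑ l, ∑ i, x l i ^ 2 := by positivity
  have hnr : ∑ l, n l ^ 2 ≤ (r : ℝ) * lam := sum_sq_le lam n hlam
  -- split
  have hsq : ∀ a b, Sf u x a a b ^ 2
      ≤ 2 * (∑ l, 2 * (u l a * u l b * x l a)) ^ 2 + 2 * (∑ l, u l a ^ 2 * x l b) ^ 2 := by
    intro a b
    have hsplit : Sf u x a a b
        = (∑ l, 2 * (u l a * u l b * x l a)) + (∑ l, u l a ^ 2 * x l b) := by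
      rw [Sf, ← Finset.sum_add_distrib]
      exact Finset.sum_congr rfl fun l _ => by ring
    rw [hsplit]
    nlinarith [sq_nonneg ((∑ l, 2 * (u l a * u l b * x l a)) - (∑ l, u l a ^ 2 * x l b))]
  -- first piece
  have T1 : ∀ a b : Fin d, (∑ l, 2 * (u l a * u l b * x l a)) ^ 2
      ≤ 4 * ((∑ l, (u l a * u l b) ^ 2) * Y a) := by
    intro a b
    have e : (∑ l, 2 * (u l a * u l b * x l a)) = 2 * ∑ l, (u l a * u l b) * x l a := by
      rw [Finset.mul_sum]
    rw [e]
    have := Finset.sum_mul_sq_le_sq_mul_sq Finset.univ (fun l => u l a * u l b) (fun l => x l a)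
    nlinarith [this]
  have T1sum : ∑ a, ∑ b, 4 * ((∑ l, (u l a * u l b) ^ 2) * Y a)
      ≤ 4 * s ^ 2 * ((r : ℝ) * lam) * ∑ a, Y a := by
    have inner : ∀ a : Fin d, ∑ b, (∑ l, (u l a * u l b) ^ 2) = ∑ l, u l a ^ 2 * n l := by
      intro a
      rw [Finset.sum_comm]
      refine Finset.sum_congr rfl fun l _ => ?_
      simp only [hn]
      rw [Finset.mul_sum]
      exact Finset.sum_congr rfl fun b _ => by ring
    have inner2 : ∀ a : Fin d, ∑ l, u l a ^ 2 * n l ≤ s ^ 2 * ((r : ℝ) * lam) := by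
      intro a
      calc ∑ l, u l a ^ 2 * n l ≤ ∑ l, s ^ 2 * n l * n l :=
            Finset.sum_le_sum fun l _ => mul_le_mul_of_nonneg_right (hu2 l a) (hn0 l)
        _ = s ^ 2 * ∑ l, n l ^ 2 := by
              rw [Finset.mul_sum]; exact Finset.sum_congr rfl fun l _ => by ring
        _ ≤ s ^ 2 * ((r : ℝ) * lam) := mul_le_mul_of_nonneg_left hnr (sq_nonneg s)
    calc ∑ a, ∑ b, 4 * ((∑ l, (u l a * u l b) ^ 2) * Y a)
        = ∑ a, 4 * ((∑ l, u l a ^ 2 * n l) * Y a) := by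
          refine Finset.sum_congr rfl fun a _ => ?_
          rw [← inner a, Finset.sum_mul, Finset.mul_sum]
      _ ≤ ∑ a, 4 * (s ^ 2 * ((r : ℝ) * lam) * Y a) := by
          refine Finset.sum_le_sum fun a _ => ?_
          have := mul_le_mul_of_nonneg_right (inner2 a) (hY0 a)
          linarith
      _ = 4 * s ^ 2 * ((r : ℝ) * lam) * ∑ a, Y a := by
          rw [Finset.mul_sum]
          exact Finset.sum_congr rfl fun a _ => by ring
  -- second piece
  have T2 : ∀ a b : Fin d, (∑ l, u l a ^ 2 * x l b) ^ 2
      ≤ (∑ l, (u l a ^ 2) ^ 2) * Y b := by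
    intro a b
    exact Finset.sum_mul_sq_le_sq_mul_sq Finset.univ (fun l => u l a ^ 2) (fun l => x l b)
  have T2sum : ∑ a, ∑ b, (∑ l, (u l a ^ 2) ^ 2) * Y b
      ≤ s ^ 2 * ((r : ℝ) * lam) * ∑ b, Y b := by
    have hC : ∑ a, ∑ l, (u l a ^ 2) ^ 2 ≤ s ^ 2 * ((r : ℝ) * lam) := by
      rw [Finset.sum_comm]
      calc ∑ l, ∑ a, (u l a ^ 2) ^ 2 ≤ ∑ l, ∑ a, (s ^ 2 * n l) * u l a ^ 2 := by
            refine Finset.sum_le_sum fun l _ => Finset.sum_le_sum fun a _ => ?_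
            have := mul_le_mul_of_nonneg_right (hu2 l a) (sq_nonneg (u l a))
            nlinarith [this]
        _ = ∑ l, s ^ 2 * n l ^ 2 := by
            refine Finset.sum_congr rfl fun l _ => ?_
            rw [← Finset.mul_sum, hn]
            ring
        _ = s ^ 2 * ∑ l, n l ^ 2 := by rw [Finset.mul_sum]
        _ ≤ s ^ 2 * ((r : ℝ) * lam) := mul_le_mul_of_nonneg_left hnr (sq_nonneg s)
    calc ∑ a, ∑ b, (∑ l, (u l a ^ 2) ^ 2) * Y b
        = (∑ a, ∑ l, (u l a ^ 2) ^ 2) * ∑ b, Y b := by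
          rw [Finset.sum_mul]
          exact Finset.sum_congr rfl fun a _ => by rw [Finset.mul_sum]
      _ ≤ s ^ 2 * ((r : ℝ) * lam) * ∑ b, Y b := by
          have h0 : 0 ≤ ∑ b, Y b := Finset.sum_nonneg fun b _ => hY0 b
          exact mul_le_mul_of_nonneg_right hC h0
  -- combine
  calc ∑ a, ∑ b, Sf u x a a b ^ 2
      ≤ ∑ a, ∑ b, (2 * (∑ l, 2 * (u l a * u l b * x l a)) ^ 2
          + 2 * (∑ l, u l a ^ 2 * x l b) ^ 2) :=
        Finset.sum_le_sum fun a _ => Finset.sum_le_sum fun b _ => hsq a b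
    _ = 2 * (∑ a, ∑ b, (∑ l, 2 * (u l a * u l b * x l a)) ^ 2)
          + 2 * (∑ a, ∑ b, (∑ l, u l a ^ 2 * x l b) ^ 2) := by
        simp only [Finset.sum_add_distrib, Finset.mul_sum]
    _ ≤ 2 * (∑ a, ∑ b, 4 * ((∑ l, (u l a * u l b) ^ 2) * Y a))
          + 2 * (∑ a, ∑ b, (∑ l, (u l a ^ 2) ^ 2) * Y b) := by
        have g1 : (∑ a, ∑ b, (∑ l, 2 * (u l a * u l b * x l a)) ^ 2)
            ≤ ∑ a, ∑ b, 4 * ((∑ l, (u l a * u l b) ^ 2) * Y a) :=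
          Finset.sum_le_sum fun a _ => Finset.sum_le_sum fun b _ => T1 a b
        have g2 : (∑ a, ∑ b, (∑ l, u l a ^ 2 * x l b) ^ 2)
            ≤ ∑ a, ∑ b, (∑ l, (u l a ^ 2) ^ 2) * Y b :=
          Finset.sum_le_sum fun a _ => Finset.sum_le_sum fun b _ => T2 a b
        linarith
    _ ≤ 2 * (4 * s ^ 2 * ((r : ℝ) * lam) * ∑ a, Y a)
          + 2 * (s ^ 2 * ((r : ℝ) * lam) * ∑ b, Y b) := by
        linarith [T1sum, T2sum]
    _ = 10 * s ^ 2 * ((r : ℝ) * lam) * ∑ a, Y a := by ring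
    _ = 10 * s ^ 2 * ((r : ℝ) * lam) * (∑ l, ∑ i, x l i ^ 2) := by rw [hTX]
lemma key (μ : ℝ) (hμd : 0 ≤ μ / (d : ℝ)) (u x : Fin r → Fin d → ℝ) (lam : ℝ)
    (hlam0 : 0 ≤ lam)
    (hlam : ∀ l, (∑ i, u l i ^ 2) ^ 2 ≤ lam)
    (hinf : ∀ l i, |u l i| ≤ Real.sqrt (μ / (d : ℝ)) * Real.sqrt (∑ i', u l i' ^ 2))
    (hcor : ∀ l m, l ≠ m → |∑ i, u l i * u m i|
        ≤ Real.sqrt (μ / (d : ℝ)) * (Real.sqrt (∑ i, u l i ^ 2) * Real.sqrt (∑ i, u m i ^ 2))) :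
    ∑ t ∈ sortedTriples d, Sf u x t.1 t.2.1 t.2.2 ^ 2 ≤
      (∑ l, (1 / 2 * (∑ i, u l i ^ 2) ^ 2 * (∑ i, x l i ^ 2)
          + (∑ i, u l i ^ 2) * (∑ i, u l i * x l i) ^ 2))
        + 100 * ((r : ℝ) * Real.sqrt (μ / (d : ℝ)) + μ * (r : ℝ) / (d : ℝ)) * lam
            * (∑ l, ∑ i, x l i ^ 2) := by
  set s := Real.sqrt (μ / (d : ℝ)) with hsdef
  have hs : 0 ≤ s := Real.sqrt_nonneg _
  have hs2 : s ^ 2 = μ / (d : ℝ) := Real.sq_sqrt hμd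
  set n : Fin r → ℝ := fun l => ∑ i, u l i ^ 2 with hn
  have hn0 : ∀ l, 0 ≤ n l := fun l => Finset.sum_nonneg fun i _ => sq_nonneg _
  set X : Fin r → ℝ := fun l => ∑ i, x l i ^ 2 with hX
  have hX0 : ∀ l, 0 ≤ X l := fun l => Finset.sum_nonneg fun i _ => sq_nonneg _
  set TX : ℝ := ∑ l, X l with hTX
  have hTX0 : 0 ≤ TX := Finset.sum_nonneg fun l _ => hX0 l
  have hu2 : ∀ l i, u l i ^ 2 ≤ s ^ 2 * n l := by
    intro l i
    have h := mul_self_le_mul_self (abs_nonneg (u l i)) (hinf l i)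
    have h1 : |u l i| * |u l i| = u l i ^ 2 := by rw [← abs_mul, abs_mul_self]; ring
    have h2 : (s * Real.sqrt (n l)) * (s * Real.sqrt (n l)) = s ^ 2 * (Real.sqrt (n l)) ^ 2 := by
      ring
    rw [Real.sq_sqrt (hn0 l)] at h2
    calc u l i ^ 2 = |u l i| * |u l i| := h1.symm
      _ ≤ (s * Real.sqrt (n l)) * (s * Real.sqrt (n l)) := h
      _ = s ^ 2 * n l := h2
  have hnm_lam : ∀ l m : Fin r, n l * n m ≤ lam := by
    intro l m
    nlinarith [hlam l, hlam m, hn0 l, hn0 m, sq_nonneg (n l - n m)]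
  -- diagonal identity
  have diag : ∀ l : Fin r,
      3 * (∑ i, u l i * u l i) ^ 2 * (∑ i, x l i * x l i)
        + 6 * (∑ i, u l i * u l i) * (∑ i, u l i * x l i) * (∑ i, u l i * x l i)
      = 6 * (1 / 2 * n l ^ 2 * X l + n l * (∑ i, u l i * x l i) ^ 2) := by
    intro l
    have e1 : (∑ i, u l i * u l i) = n l :=
      Finset.sum_congr rfl fun i _ => (sq (u l i)).symm
    have e2 : (∑ i, x l i * x l i) = X l :=
      Finset.sum_congr rfl fun i _ => (sq (x l i)).symm
    rw [e1, e2]; ring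
  -- off-diagonal bound
  have off : ∀ l : Fin r, ∀ m ∈ Finset.univ.erase l,
      3 * (∑ i, u l i * u m i) ^ 2 * (∑ i, x l i * x m i)
        + 6 * (∑ i, u l i * u m i) * (∑ i, u l i * x m i) * (∑ i, u m i * x l i)
      ≤ (3 * s ^ 2 + 6 * s) * lam * ((X l + X m) / 2) := by
    intro l m hm
    have hne : l ≠ m := (Finset.ne_of_mem_erase hm).symm
    refine pair_bound s _ _ _ _ (n l) (n m) (X l) (X m) lam hs (hn0 l) (hn0 m) (hX0 l) (hX0 m)
      (hnm_lam l m) (hcor l m hne) ?_ ?_ ?_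
    · have := abs_sum_mul_le (fun i => x l i) (fun i => x m i); simpa using this
    · have := abs_sum_mul_le (fun i => u l i) (fun i => x m i); simpa using this
    · have := abs_sum_mul_le (fun i => u m i) (fun i => x l i); simpa using this
  have offb0 : ∀ l m : Fin r, 0 ≤ (3 * s ^ 2 + 6 * s) * lam * ((X l + X m) / 2) := by
    intro l m
    have h1 : 0 ≤ 3 * s ^ 2 + 6 * s := by positivity
    have h2 : 0 ≤ (X l + X m) / 2 := by
      have := hX0 l; have := hX0 m; linarith
    positivity
  -- sum of off-diagonal bounds
  have offsum_eval : ∑ l, ∑ m, (3 * s ^ 2 + 6 * s) * lam * ((X l + X m) / 2)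
      = (3 * s ^ 2 + 6 * s) * lam * ((r : ℝ) * TX) := by
    have e1 : ∀ l : Fin r, ∑ m, (3 * s ^ 2 + 6 * s) * lam * ((X l + X m) / 2)
        = (3 * s ^ 2 + 6 * s) * lam * (((r : ℝ) * X l + TX) / 2) := by
      intro l
      rw [← Finset.mul_sum]
      congr 1
      rw [← Finset.sum_div]
      congr 1
      rw [Finset.sum_add_distrib, Finset.sum_const, Finset.card_univ, Fintype.card_fin,
        nsmul_eq_mul]
    rw [Finset.sum_congr rfl fun l _ => e1 l, ← Finset.mul_sum]
    congr 1
    have : ∑ l, (((r : ℝ) * X l + TX) / 2) = ((r : ℝ) * TX + (r : ℝ) * TX) / 2 := by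
      rw [← Finset.sum_div]
      congr 1
      rw [Finset.sum_add_distrib, Finset.sum_const, Finset.card_univ, Fintype.card_fin,
        nsmul_eq_mul, ← Finset.mul_sum]
    rw [this]; ring
  -- main expansion split into diag + offdiag
  have main : ∑ i, ∑ j, ∑ k, Sf u x i j k ^ 2
      ≤ (∑ l, 6 * (1 / 2 * n l ^ 2 * X l + n l * (∑ i, u l i * x l i) ^ 2))
        + (3 * s ^ 2 + 6 * s) * lam * ((r : ℝ) * TX) := by
    rw [expand u x, ← offsum_eval]
    have hsplit : ∀ l : Fin r,
        (∑ m, (3 * (∑ i, u l i * u m i) ^ 2 * (∑ i, x l i * x m i)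
          + 6 * (∑ i, u l i * u m i) * (∑ i, u l i * x m i) * (∑ i, u m i * x l i)))
        ≤ 6 * (1 / 2 * n l ^ 2 * X l + n l * (∑ i, u l i * x l i) ^ 2)
          + ∑ m, (3 * s ^ 2 + 6 * s) * lam * ((X l + X m) / 2) := by
      intro l
      rw [← Finset.add_sum_erase _ _ (Finset.mem_univ l)]
      have t1 : (3 * (∑ i, u l i * u l i) ^ 2 * (∑ i, x l i * x l i)
          + 6 * (∑ i, u l i * u l i) * (∑ i, u l i * x l i) * (∑ i, u l i * x l i))
          = 6 * (1 / 2 * n l ^ 2 * X l + n l * (∑ i, u l i * x l i) ^ 2) := diag l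
      have t2 : ∑ m ∈ Finset.univ.erase l,
          (3 * (∑ i, u l i * u m i) ^ 2 * (∑ i, x l i * x m i)
            + 6 * (∑ i, u l i * u m i) * (∑ i, u l i * x m i) * (∑ i, u m i * x l i))
          ≤ ∑ m ∈ Finset.univ.erase l, (3 * s ^ 2 + 6 * s) * lam * ((X l + X m) / 2) :=
        Finset.sum_le_sum fun m hm => off l m hm
      have t3 : ∑ m ∈ Finset.univ.erase l, (3 * s ^ 2 + 6 * s) * lam * ((X l + X m) / 2)
          ≤ ∑ m, (3 * s ^ 2 + 6 * s) * lam * ((X l + X m) / 2) :=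
        Finset.sum_le_sum_of_subset_of_nonneg (Finset.subset_univ _)
          fun m _ _ => offb0 l m
      linarith
    calc ∑ l, ∑ m, (3 * (∑ i, u l i * u m i) ^ 2 * (∑ i, x l i * x m i)
          + 6 * (∑ i, u l i * u m i) * (∑ i, u l i * x m i) * (∑ i, u m i * x l i))
        ≤ ∑ l, (6 * (1 / 2 * n l ^ 2 * X l + n l * (∑ i, u l i * x l i) ^ 2)
            + ∑ m, (3 * s ^ 2 + 6 * s) * lam * ((X l + X m) / 2)) :=
          Finset.sum_le_sum fun l _ => hsplit l
      _ = _ := Finset.sum_add_distrib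
  -- corrections
  have hcorr : ∑ a, ∑ b, Sf u x a a b ^ 2 ≤ 10 * s ^ 2 * ((r : ℝ) * lam) * TX := by
    have := corr u x s lam hs hlam0 hlam hu2
    have hTXe : (∑ l, ∑ i, x l i ^ 2) = TX := rfl
    rw [hTXe] at this
    exact this
  -- final numeric assembly
  have hfinal := counting u x
  have hsum6 : (∑ l, 6 * (1 / 2 * n l ^ 2 * X l + n l * (∑ i, u l i * x l i) ^ 2))
      = 6 * ∑ l, (1 / 2 * n l ^ 2 * X l + n l * (∑ i, u l i * x l i) ^ 2) := by
    rw [Finset.mul_sum]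
  have hA : 0 ≤ s ^ 2 * ((r : ℝ) * lam) * TX := by positivity
  have hB : 0 ≤ s * ((r : ℝ) * lam) * TX := by positivity
  have hrw : μ * (r : ℝ) / (d : ℝ) = s ^ 2 * (r : ℝ) := by rw [hs2]; ring
  rw [hrw]
  have goal2 : (1 / 6 : ℝ) * ((∑ l, 6 * (1 / 2 * n l ^ 2 * X l
        + n l * (∑ i, u l i * x l i) ^ 2)) + (3 * s ^ 2 + 6 * s) * lam * ((r : ℝ) * TX))
      + 2 * (10 * s ^ 2 * ((r : ℝ) * lam) * TX)
      ≤ (∑ l, (1 / 2 * n l ^ 2 * X l + n l * (∑ i, u l i * x l i) ^ 2))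
        + 100 * ((r : ℝ) * s + s ^ 2 * (r : ℝ)) * lam * TX := by
    rw [hsum6]
    have e1 : (3 * s ^ 2 + 6 * s) * lam * ((r : ℝ) * TX)
        = 3 * (s ^ 2 * ((r : ℝ) * lam) * TX) + 6 * (s * ((r : ℝ) * lam) * TX) := by ring
    have e2 : 2 * (10 * s ^ 2 * ((r : ℝ) * lam) * TX)
        = 20 * (s ^ 2 * ((r : ℝ) * lam) * TX) := by ring
    have e3 : 100 * ((r : ℝ) * s + s ^ 2 * (r : ℝ)) * lam * TX
        = 100 * (s * ((r : ℝ) * lam) * TX) + 100 * (s ^ 2 * ((r : ℝ) * lam) * TX) := by ring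
    rw [e1, e2, e3]
    linarith
  have mono : (1 / 6 : ℝ) * (∑ i, ∑ j, ∑ k, Sf u x i j k ^ 2)
      + 2 * (∑ a, ∑ b, Sf u x a a b ^ 2)
      ≤ (1 / 6 : ℝ) * ((∑ l, 6 * (1 / 2 * n l ^ 2 * X l
          + n l * (∑ i, u l i * x l i) ^ 2)) + (3 * s ^ 2 + 6 * s) * lam * ((r : ℝ) * TX))
        + 2 * (10 * s ^ 2 * ((r : ℝ) * lam) * TX) := by
    have := main
    have := hcorr
    linarith
  calc ∑ t ∈ sortedTriples d, Sf u x t.1 t.2.1 t.2.2 ^ 2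
      ≤ (1/6) * (∑ i, ∑ j, ∑ k, Sf u x i j k ^ 2) + 2 * ∑ a, ∑ b, Sf u x a a b ^ 2 := hfinal
    _ ≤ _ := le_trans mono goal2
-- dot product of hvec with x equals Sf
lemma hdot (U : Matrix (Fin d) (Fin r) ℝ) (x : Fin r × Fin d → ℝ) (t : Idx d) :
    ∑ p : Fin r × Fin d, hvec U t p * x p
      = Sf (fun l i => U i l) (fun l i => x (l, i)) t.1 t.2.1 t.2.2 := by
  rw [Fintype.sum_prod_type, Sf]
  refine Finset.sum_congr rfl fun l _ => ?_
  simp only [hvec, add_mul, ite_mul, zero_mul]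
  rw [Finset.sum_add_distrib, Finset.sum_add_distrib, Finset.sum_ite_eq, Finset.sum_ite_eq,
    Finset.sum_ite_eq]
  simp

-- gram quadratic form
lemma qf_gram {ι κ : Type*} [Fintype ι] (h : κ → ι → ℝ) (S : Finset κ) (x : ι → ℝ) :
    ∑ p, ∑ q, x p * (∑ t ∈ S, h t p * h t q) * x q = ∑ t ∈ S, (∑ p, h t p * x p) ^ 2 := by
  have e1 : ∀ p : ι, ∑ q, x p * (∑ t ∈ S, h t p * h t q) * x q
      = ∑ q, ∑ t ∈ S, x p * (h t p * h t q) * x q := by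
    intro p
    refine Finset.sum_congr rfl fun q _ => ?_
    rw [Finset.mul_sum, Finset.sum_mul]
  rw [Finset.sum_congr rfl fun p _ => e1 p]
  rw [Finset.sum_congr rfl fun p _ => Finset.sum_comm (s := Finset.univ) (t := S)
    (f := fun q t => x p * (h t p * h t q) * x q)]
  rw [Finset.sum_comm]
  refine Finset.sum_congr rfl fun t _ => ?_
  rw [pow_two, Finset.sum_mul_sum]
  refine Finset.sum_congr rfl fun p _ => Finset.sum_congr rfl fun q _ => by ring

lemma qf_expand {ι : Type*} [Fintype ι] (A : Matrix ι ι ℝ) (x : ι → ℝ) :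
    x ⬝ᵥ (A *ᵥ x) = ∑ p, ∑ q, x p * A p q * x q := by
  simp only [dotProduct, Matrix.mulVec, Finset.mul_sum]
  exact Finset.sum_congr rfl fun p _ => Finset.sum_congr rfl fun q _ => by ring


lemma norm2_sq (U : Matrix (Fin d) (Fin r) ℝ) (l : Fin r) :
    norm2 (colU U l) ^ 2 = ∑ i, U i l ^ 2 :=
  Real.sq_sqrt (by positivity)

lemma norm2_pow4 (U : Matrix (Fin d) (Fin r) ℝ) (l : Fin r) :
    norm2 (colU U l) ^ 4 = (∑ i, U i l ^ 2) ^ 2 := by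
  rw [show (4 : ℕ) = 2 * 2 from rfl, pow_mul, norm2_sq]

lemma qf_one (c : ℝ) (x : Fin r × Fin d → ℝ) :
    (∑ p : Fin r × Fin d, ∑ q : Fin r × Fin d,
        x p * (c • (1 : Matrix (Fin r × Fin d) (Fin r × Fin d) ℝ)) p q * x q)
      = c * ∑ l, ∑ i, x (l, i) ^ 2 := by
  have e1 : ∀ p : Fin r × Fin d, (∑ q : Fin r × Fin d,
      x p * (c • (1 : Matrix (Fin r × Fin d) (Fin r × Fin d) ℝ)) p q * x q) = c * x p ^ 2 := by
    intro p
    have : ∀ q : Fin r × Fin d, x p * (c • (1 : Matrix (Fin r × Fin d) (Fin r × Fin d) ℝ)) p q * x q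
        = if p = q then c * (x p * x q) else 0 := by
      intro q
      by_cases h : p = q <;> simp [Matrix.smul_apply, Matrix.one_apply, h] <;> ring
    rw [Finset.sum_congr rfl fun q _ => this q, Finset.sum_ite_eq]
    simp [pow_two]
  rw [Finset.sum_congr rfl fun p _ => e1 p, ← Finset.mul_sum]
  congr 1
  exact Fintype.sum_prod_type _

lemma qf_B (U : Matrix (Fin d) (Fin r) ℝ) (x : Fin r × Fin d → ℝ) :
    (∑ p : Fin r × Fin d, ∑ q : Fin r × Fin d,
      x p * (if p.1 = q.1 then
          1 / 2 * norm2 (colU U p.1) ^ 4 * (if p.2 = q.2 then (1:ℝ) else 0)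
            + norm2 (colU U p.1) ^ 2 * U p.2 p.1 * U q.2 p.1 else 0) * x q)
    = ∑ l, (1 / 2 * (∑ i, U i l ^ 2) ^ 2 * (∑ i, x (l, i) ^ 2)
        + (∑ i, U i l ^ 2) * (∑ i, U i l * x (l, i)) ^ 2) := by
  rw [Fintype.sum_prod_type]
  refine Finset.sum_congr rfl fun l _ => ?_
  have step1 : ∀ s : Fin d, (∑ q : Fin r × Fin d,
      x (l, s) * (if l = q.1 then
          1 / 2 * norm2 (colU U l) ^ 4 * (if s = q.2 then (1:ℝ) else 0)
            + norm2 (colU U l) ^ 2 * U s l * U q.2 l else 0) * x q)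
      = ∑ s' : Fin d, x (l, s) * (1 / 2 * norm2 (colU U l) ^ 4 * (if s = s' then (1:ℝ) else 0)
            + norm2 (colU U l) ^ 2 * U s l * U s' l) * x (l, s') := by
    intro s
    rw [Fintype.sum_prod_type]
    have h1 : ∀ l' : Fin r, (∑ s' : Fin d,
        x (l, s) * (if l = l' then
          1 / 2 * norm2 (colU U l) ^ 4 * (if s = s' then (1:ℝ) else 0)
            + norm2 (colU U l) ^ 2 * U s l * U s' l else 0) * x (l', s'))
        = if l = l' then (∑ s' : Fin d,
            x (l, s) * (1 / 2 * norm2 (colU U l) ^ 4 * (if s = s' then (1:ℝ) else 0)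
              + norm2 (colU U l) ^ 2 * U s l * U s' l) * x (l', s')) else 0 := by
      intro l'
      by_cases h : l = l'
      · simp [h]
      · simp [h]
    rw [Finset.sum_congr rfl fun l' _ => h1 l', Finset.sum_ite_eq]
    simp
  rw [Finset.sum_congr rfl fun s _ => step1 s]
  have step2 : ∀ s s' : Fin d,
      x (l, s) * (1 / 2 * norm2 (colU U l) ^ 4 * (if s = s' then (1:ℝ) else 0)
          + norm2 (colU U l) ^ 2 * U s l * U s' l) * x (l, s')
      = (if s = s' then 1 / 2 * norm2 (colU U l) ^ 4 * (x (l, s) * x (l, s')) else 0)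
        + norm2 (colU U l) ^ 2 * ((U s l * x (l, s)) * (U s' l * x (l, s'))) := by
    intro s s'
    by_cases h : s = s' <;> simp [h] <;> ring
  rw [Finset.sum_congr rfl fun s _ => Finset.sum_congr rfl fun s' _ => step2 s s']
  rw [Finset.sum_congr rfl fun s _ => Finset.sum_add_distrib, Finset.sum_add_distrib]
  have part1 : (∑ s : Fin d, ∑ s' : Fin d,
      if s = s' then 1 / 2 * norm2 (colU U l) ^ 4 * (x (l, s) * x (l, s')) else 0)
      = 1 / 2 * (∑ i, U i l ^ 2) ^ 2 * (∑ i, x (l, i) ^ 2) := by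
    have e : ∀ s : Fin d, (∑ s' : Fin d,
        if s = s' then 1 / 2 * norm2 (colU U l) ^ 4 * (x (l, s) * x (l, s')) else 0)
        = 1 / 2 * norm2 (colU U l) ^ 4 * x (l, s) ^ 2 := by
      intro s
      rw [Finset.sum_ite_eq]
      simp [pow_two]
    rw [Finset.sum_congr rfl fun s _ => e s, ← Finset.mul_sum, norm2_pow4]
  have part2 : (∑ s : Fin d, ∑ s' : Fin d,
      norm2 (colU U l) ^ 2 * ((U s l * x (l, s)) * (U s' l * x (l, s'))))
      = (∑ i, U i l ^ 2) * (∑ i, U i l * x (l, i)) ^ 2 := by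
    rw [show (∑ s : Fin d, ∑ s' : Fin d,
        norm2 (colU U l) ^ 2 * ((U s l * x (l, s)) * (U s' l * x (l, s'))))
      = norm2 (colU U l) ^ 2 * ((∑ s : Fin d, U s l * x (l, s)) * (∑ s' : Fin d, U s' l * x (l, s'))) from ?_]
    · rw [norm2_sq, ← pow_two]
    · rw [Finset.sum_mul_sum, Finset.mul_sum]
      exact Finset.sum_congr rfl fun s _ => by rw [Finset.mul_sum]
  rw [part1, part2]

end Statement4Aux

/-- Loewner upper bound on `∑_{i≤j≤k} h_{ijk} h_{ijk}ᵀ` in terms of the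
block-diagonal matrix `B` under incoherence. -/
theorem statement4 :
    ∃ C > (0 : ℝ),
      ∀ (d r : ℕ) (μ : ℝ) (U : Matrix (Fin d) (Fin r) ℝ), Incoherent μ U →
        Matrix.PosSemidef
          ((Matrix.of fun ls ls' : Fin r × Fin d =>
              if ls.1 = ls'.1 then
                1 / 2 * norm2 (colU U ls.1) ^ 4 * (if ls.2 = ls'.2 then (1 : ℝ) else 0) +
                  norm2 (colU U ls.1) ^ 2 * U ls.2 ls.1 * U ls'.2 ls.1
              else 0) +
            (C * ((r : ℝ) * Real.sqrt (μ / (d : ℝ)) + μ * r / (d : ℝ)) *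
                ⨆ l : Fin r, norm2 (colU U l) ^ 4) •
              (1 : Matrix (Fin r × Fin d) (Fin r × Fin d) ℝ) -
            Matrix.of fun a b => ∑ t ∈ sortedTriples d, hvec U t a * hvec U t b) := by
  refine ⟨100, by norm_num, ?_⟩
  intro d r μ U hInc
  set lam := ⨆ l : Fin r, norm2 (colU U l) ^ 4 with hlamdef
  set c : ℝ := 100 * ((r : ℝ) * Real.sqrt (μ / (d : ℝ)) + μ * r / (d : ℝ)) * lam with hcdef
  set Bm : Matrix (Fin r × Fin d) (Fin r × Fin d) ℝ :=
    Matrix.of fun ls ls' : Fin r × Fin d =>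
      if ls.1 = ls'.1 then
        1 / 2 * norm2 (colU U ls.1) ^ 4 * (if ls.2 = ls'.2 then (1 : ℝ) else 0) +
          norm2 (colU U ls.1) ^ 2 * U ls.2 ls.1 * U ls'.2 ls.1
      else 0 with hBmdef
  set Mm : Matrix (Fin r × Fin d) (Fin r × Fin d) ℝ :=
    Matrix.of fun a b => ∑ t ∈ sortedTriples d, hvec U t a * hvec U t b with hMmdef
  -- Hermitian part
  have hBh : Bmᴴ = Bm := by
    ext p q
    simp only [hBmdef, Matrix.conjTranspose_apply, Matrix.of_apply, star_trivial]
    by_cases h : q.1 = p.1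
    · rw [if_pos h, if_pos h.symm, h]
      by_cases h2 : q.2 = p.2
      · rw [h2]
      · rw [if_neg h2, if_neg fun hh => h2 hh.symm]; ring
    · rw [if_neg h, if_neg fun hh => h hh.symm]
  have hMh : Mmᴴ = Mm := by
    ext p q
    simp only [hMmdef, Matrix.conjTranspose_apply, Matrix.of_apply, star_trivial]
    exact Finset.sum_congr rfl fun t _ => mul_comm _ _
  have hherm : (Bm + c • (1 : Matrix (Fin r × Fin d) (Fin r × Fin d) ℝ) - Mm).IsHermitian := by
    show _ᴴ = _
    rw [Matrix.conjTranspose_sub, Matrix.conjTranspose_add, Matrix.conjTranspose_smul,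
      Matrix.conjTranspose_one, hBh, hMh, star_trivial]
  by_cases hμd : 0 ≤ μ / (d : ℝ)
  · -- main case
    have hlam : ∀ l, (∑ i, U i l ^ 2) ^ 2 ≤ lam := by
      intro l
      rw [← norm2_pow4 U l, hlamdef]
      exact le_ciSup (f := fun l : Fin r => norm2 (colU U l) ^ 4)
        (Set.Finite.bddAbove (Set.finite_range _)) l
    have hlam0 : 0 ≤ lam := by
      rcases isEmpty_or_nonempty (Fin r) with hr | hr
      · rw [hlamdef]; rw [Real.iSup_of_isEmpty]
      · obtain ⟨l⟩ := hr
        exact le_trans (sq_nonneg _) (hlam l)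
    have hinf' : ∀ l i, |U i l| ≤ Real.sqrt (μ / (d : ℝ)) * Real.sqrt (∑ i', U i' l ^ 2) := by
      intro l i
      have h1 : |U i l| ≤ normInf (colU U l) :=
        le_ciSup (f := fun i => |colU U l i|) (Set.Finite.bddAbove (Set.finite_range _)) i
      have h2 := hInc.2.1 l
      exact le_trans h1 h2
    have hcor' : ∀ l m, l ≠ m → |∑ i, U i l * U i m|
        ≤ Real.sqrt (μ / (d : ℝ)) * (Real.sqrt (∑ i, U i l ^ 2) * Real.sqrt (∑ i, U i m ^ 2)) :=
      fun l m hne => hInc.2.2 l m hne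
    refine posSemidef_iff_dotProduct_mulVec.mpr ⟨hherm, ?_⟩
    intro xv
    have hstar : star xv = xv := star_trivial xv
    rw [hstar, qf_expand]
    have hsplit : ∑ p, ∑ q, xv p *
          (Bm + c • (1 : Matrix (Fin r × Fin d) (Fin r × Fin d) ℝ) - Mm) p q * xv q
        = (∑ p, ∑ q, xv p * Bm p q * xv q)
          + (∑ p, ∑ q, xv p * (c • (1 : Matrix (Fin r × Fin d) (Fin r × Fin d) ℝ)) p q * xv q)
          - (∑ p, ∑ q, xv p * Mm p q * xv q) := by
      simp only [Matrix.sub_apply, Matrix.add_apply]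
      calc ∑ p, ∑ q, xv p * (Bm p q + (c • (1 : Matrix (Fin r × Fin d) (Fin r × Fin d) ℝ)) p q
              - Mm p q) * xv q
          = ∑ p, ∑ q, (xv p * Bm p q * xv q
              + xv p * ((c • (1 : Matrix (Fin r × Fin d) (Fin r × Fin d) ℝ)) p q) * xv q
              - xv p * Mm p q * xv q) :=
            Finset.sum_congr rfl fun p _ => Finset.sum_congr rfl fun q _ => by ring
        _ = _ := by simp only [Finset.sum_add_distrib, Finset.sum_sub_distrib]
    rw [hsplit]
    have hQB : (∑ p, ∑ q, xv p * Bm p q * xv q)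
        = ∑ l, (1 / 2 * (∑ i, U i l ^ 2) ^ 2 * (∑ i, xv (l, i) ^ 2)
            + (∑ i, U i l ^ 2) * (∑ i, U i l * xv (l, i)) ^ 2) := qf_B U xv
    have hQc : (∑ p, ∑ q, xv p *
          (c • (1 : Matrix (Fin r × Fin d) (Fin r × Fin d) ℝ)) p q * xv q)
        = c * ∑ l, ∑ i, xv (l, i) ^ 2 := qf_one c xv
    have hQM : (∑ p, ∑ q, xv p * Mm p q * xv q)
        = ∑ t ∈ sortedTriples d,
            Sf (fun l i => U i l) (fun l i => xv (l, i)) t.1 t.2.1 t.2.2 ^ 2 := by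
      have h1 : (∑ p, ∑ q, xv p * Mm p q * xv q)
          = ∑ t ∈ sortedTriples d, (∑ p, hvec U t p * xv p) ^ 2 :=
        qf_gram (fun t p => hvec U t p) (sortedTriples d) xv
      rw [h1]
      exact Finset.sum_congr rfl fun t _ => by rw [hdot]
    rw [hQB, hQc, hQM]
    have hk := key μ hμd (fun l i => U i l) (fun l i => xv (l, i)) lam hlam0 hlam hinf' hcor'
    have hceq : c * (∑ l, ∑ i, xv (l, i) ^ 2)
        = 100 * ((r : ℝ) * Real.sqrt (μ / (d : ℝ)) + μ * (r : ℝ) / (d : ℝ)) * lam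
            * (∑ l, ∑ i, xv (l, i) ^ 2) := by rw [hcdef]
    rw [hceq]
    linarith [hk]
  · -- degenerate case
    have hs0 : Real.sqrt (μ / (d : ℝ)) = 0 := Real.sqrt_eq_zero_of_nonpos (le_of_not_ge hμd)
    have hU0 : ∀ i l, U i l = 0 := by
      intro i l
      have h1 : |U i l| ≤ normInf (colU U l) :=
        le_ciSup (f := fun i => |colU U l i|) (Set.Finite.bddAbove (Set.finite_range _)) i
      have h2 := hInc.2.1 l
      rw [hs0, zero_mul] at h2
      exact abs_nonpos_iff.mp (le_trans h1 h2)
    have hc0 : ∀ l, norm2 (colU U l) = 0 := by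
      intro l
      simp [norm2, colU, hU0]
    have hlamz : lam = 0 := by
      rcases isEmpty_or_nonempty (Fin r) with hr | hr
      · rw [hlamdef]; exact Real.iSup_of_isEmpty _
      · have he : lam = ⨆ _l : Fin r, (0 : ℝ) := by
          rw [hlamdef]
          congr 1
          funext l
          rw [hc0 l]
          norm_num
        rw [he, ciSup_const]
    have hcz : c = 0 := by rw [hcdef, hlamz, mul_zero]
    have hzero : Bm + c • (1 : Matrix (Fin r × Fin d) (Fin r × Fin d) ℝ) - Mm = 0 := by
      ext p q
      simp only [hBmdef, hMmdef, Matrix.sub_apply, Matrix.add_apply, Matrix.smul_apply,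
        Matrix.of_apply, Matrix.zero_apply, Matrix.one_apply, hcz]
      simp [hc0, hU0, hvec]
    rw [hzero]
    exact Matrix.PosSemidef.zero

end TC
end
end

section
/- For every K ≥ 1 there is a constant C = C(K) > 0 with the following property. Suppose U⋆ is μ-incoherent, κ ≤ K, Ũ⋆ᵀŨ⋆ is invertible, and σ_r(Ũ⋆) ≥ λ_min^{⋆2/3}/2. Let V⋆ := Ũ⋆ (Ũ⋆ᵀŨ⋆)⁻¹ ∈ ℝ^{d²×r} with entries V⋆_{(i,j),l}. Then for every 1 ≤ l ≤ r: (i) ‖V⋆_{:,l} − ‖u_l⋆‖₂^{−4}·ũ_l⋆‖₂ ≤ C·μ r/(d·λ_min^{⋆2/3}), where ũ_l⋆ ∈ ℝ^{d²} is the l-th column of Ũ⋆ (the vectorization of u_l⋆ (u_l⋆)ᵀ); in particular | ‖V⋆_{:,l}‖₂ − ‖u_l⋆‖₂^{−2} | ≤ C·μ r/(d·λ_min^{⋆2/3}); (ii) ‖V⋆_{:,l}‖_∞ ≤ C·μ √r/(d·λ_min^{⋆2/3}); and (iii) for every 1 ≤ i ≤ d, Σ_{k=1}^d (V⋆_{(i,k),l})²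 ≤ C·μ r/(d·λ_min^{⋆4/3}). -/
noncomputable section

open MeasureTheory ProbabilityTheory Matrix

namespace TC

private lemma tc_norm2E {n : Type*} [Fintype n] (x : EuclideanSpace ℝ n) :
    ‖x‖ = Real.sqrt (∑ i, x i ^ 2) := by
  rw [EuclideanSpace.norm_eq]; simp [sq_abs]

private lemma tc_sqrtMink {n ι : Type*} [Fintype n] [Fintype ι] (F : ι → EuclideanSpace ℝ n) :
    Real.sqrt (∑ k, (∑ a, F a k) ^ 2) ≤ ∑ a, Real.sqrt (∑ k, F a k ^ 2) := by
  have h := norm_sum_le Finset.univ F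
  simp only [tc_norm2E] at h
  convert h using 3
  rw [WithLp.ofLp_sum, Finset.sum_apply]

private lemma tc_revTri {n : Type*} [Fintype n] (x y : EuclideanSpace ℝ n) :
    |Real.sqrt (∑ i, x i ^ 2) - Real.sqrt (∑ i, y i ^ 2)| ≤
      Real.sqrt (∑ i, (x i - y i) ^ 2) := by
  have h := abs_norm_sub_norm_le x y
  simp only [tc_norm2E] at h
  convert h using 3
  rfl

private lemma tc_sum_mulVec_sq {m n : Type*} [Fintype m] [Fintype n]
    (A : Matrix m n ℝ) (x : n → ℝ) :
    ∑ i, (A.mulVec x i) ^ 2 = ∑ a, x a * ((Aᵀ * A).mulVec x a) := by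
  simp only [Matrix.mulVec, dotProduct, Matrix.mul_apply, Matrix.transpose_apply, sq,
    Finset.sum_mul, Finset.mul_sum]
  rw [Finset.sum_comm]
  refine Finset.sum_congr rfl fun a _ => ?_
  rw [Finset.sum_comm]
  refine Finset.sum_congr rfl fun b _ => Finset.sum_congr rfl fun i _ => by ring

set_option maxHeartbeats 1000000 in
/-- properties of the columns of `V⋆ = Ũ (ŨᵀŨ)⁻¹`. -/
theorem statement14 :
    ∀ K : ℝ, 1 ≤ K → ∃ C > (0 : ℝ),
      ∀ (d r : ℕ) (μ : ℝ) (U : Matrix (Fin d) (Fin r) ℝ),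
        Incoherent μ U → 0 < lamMin U → lamMax U ≤ K * lamMin U →
        IsUnit (gram U).det →
        (∀ x : Fin r → ℝ,
          (lamMin U ^ ((2 : ℝ) / 3) / 2) ^ 2 * ∑ l, x l ^ 2 ≤
            ∑ ij : Fin d × Fin d, (lift U).mulVec x ij ^ 2) →
        ∀ l : Fin r,
          (Real.sqrt
              (∑ ij : Fin d × Fin d,
                (Vmat U ij l - (norm2 (colU U l) ^ 4)⁻¹ * lift U ij l) ^ 2) ≤
            C * μ * r / (d * lamMin U ^ ((2 : ℝ) / 3))) ∧
          (|Real.sqrt (∑ ij : Fin d × Fin d, Vmat U ij l ^ 2) -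
              (norm2 (colU U l) ^ 2)⁻¹| ≤
            C * μ * r / (d * lamMin U ^ ((2 : ℝ) / 3))) ∧
          ((⨆ ij : Fin d × Fin d, |Vmat U ij l|) ≤
            C * μ * Real.sqrt r / (d * lamMin U ^ ((2 : ℝ) / 3))) ∧
          ∀ i : Fin d,
            (∑ k : Fin d, Vmat U (i, k) l ^ 2) ≤
              C * μ * r / (d * lamMin U ^ ((4 : ℝ) / 3)) := by
  intro K hK
  have hK0 : (0:ℝ) < K := lt_of_lt_of_le one_pos hK
  refine ⟨16 * K ^ 2, by positivity, ?_⟩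
  intro d r μ U hInc hlam hκ hdet hσ l
  -- notation
  set lam := lamMin U with hlamdef
  set L : ℝ := lam ^ ((2:ℝ)/3) with hLdef
  have hL : 0 < L := Real.rpow_pos_of_pos hlam _
  set A := lift U with hAdef
  set G := gram U with hGdef
  set Gi := (gram U)⁻¹ with hGidef
  -- basic column norm facts
  have hn0 : ∀ a : Fin r, 0 ≤ norm2 (colU U a) := fun a => Real.sqrt_nonneg _
  have hcol3 : ∀ a : Fin r, lam ≤ norm2 (colU U a) ^ 3 := fun a =>
    ciInf_le (Finite.bddBelow_range _) a
  have hpow23 : ∀ x : ℝ, 0 ≤ x → (x ^ 3) ^ ((2:ℝ)/3) = x ^ 2 := by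
    intro x hx
    rw [← Real.rpow_natCast x 3, ← Real.rpow_mul hx, ← Real.rpow_natCast x 2]
    norm_num
  have hsq : ∀ a : Fin r, norm2 (colU U a) ^ 2 = ∑ i, U i a ^ 2 := by
    intro a
    rw [norm2, Real.sq_sqrt (by positivity)]
    rfl
  have hnpos : ∀ a : Fin r, 0 < norm2 (colU U a) := by
    intro a
    rcases lt_or_eq_of_le (hn0 a) with h | h
    · exact h
    · exfalso; have := hcol3 a; rw [← h] at this; simp at this; linarith
  have hL_le : ∀ a : Fin r, L ≤ norm2 (colU U a) ^ 2 := by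
    intro a
    have h := Real.rpow_le_rpow hlam.le (hcol3 a) (by norm_num : (0:ℝ) ≤ 2/3)
    rwa [hpow23 _ (hn0 a)] at h
  have hKL : ∀ a : Fin r, norm2 (colU U a) ^ 2 ≤ K * L := by
    intro a
    have hmax0 : norm2 (colU U a) ^ 3 ≤ lamMax U :=
      le_ciSup (Finite.bddAbove_range fun b => norm2 (colU U b) ^ 3) a
    have hmax : norm2 (colU U a) ^ 3 ≤ K * lam := hmax0.trans hκ
    have h1 : (norm2 (colU U a) ^ 3) ^ ((2:ℝ)/3) ≤ (K * lam) ^ ((2:ℝ)/3) :=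
      Real.rpow_le_rpow (pow_nonneg (hn0 a) 3) hmax (by norm_num)
    rw [hpow23 _ (hn0 a), Real.mul_rpow hK0.le hlam.le] at h1
    refine h1.trans ?_
    have hKe : K ^ ((2:ℝ)/3) ≤ K := by
      nth_rewrite 2 [← Real.rpow_one K]
      exact Real.rpow_le_rpow_of_exponent_le hK (by norm_num)
    exact mul_le_mul_of_nonneg_right hKe hL.le
  -- positivity of μ and d
  have hsum_pos : 0 < ∑ i, U i l ^ 2 := by
    have h := hL_le l; rw [hsq l] at h; linarith
  have hex : ∃ i, U i l ≠ 0 := by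
    by_contra h
    push_neg at h
    simp [h] at hsum_pos
  obtain ⟨i0, hi0⟩ := hex
  haveI : Nonempty (Fin d) := ⟨i0⟩
  have hd : (0:ℝ) < d := by
    have := i0.pos
    exact_mod_cast this
  have hr1 : (1:ℝ) ≤ r := by
    have := l.pos
    exact_mod_cast this
  have hentry : ∀ (a : Fin r) (i : Fin d),
      |U i a| ≤ Real.sqrt (μ / d) * norm2 (colU U a) := by
    intro a i
    exact le_trans (le_ciSup (Finite.bddAbove_range fun i => |colU U a i|) i) (hInc.2.1 a)
  have hμ : 0 < μ := by
    have h1 : 0 < |U i0 l| := abs_pos.mpr hi0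
    have h2 := hentry l i0
    have h3 : 0 < Real.sqrt (μ / d) := by
      by_contra h
      push_neg at h
      have : Real.sqrt (μ / d) = 0 := le_antisymm h (Real.sqrt_nonneg _)
      rw [this, zero_mul] at h2
      linarith
    have h4 : 0 < μ / d := Real.sqrt_pos.mp h3
    have := mul_pos h4 hd
    rwa [div_mul_cancel₀] at this
    exact hd.ne'
  have hμd : (0:ℝ) ≤ μ / d := by positivity
  -- gram matrix entries
  have hGram : ∀ a b, G a b = (∑ i, U i a * U i b) ^ 2 := by
    intro a b
    show ((lift U)ᵀ * lift U) a b = _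
    rw [Matrix.mul_apply]
    simp only [Matrix.transpose_apply, lift, Matrix.of_apply]
    rw [Fintype.sum_prod_type, sq, Finset.sum_mul_sum]
    exact Finset.sum_congr rfl fun i _ => Finset.sum_congr rfl fun j _ => by ring
  have hsq' : ∀ a : Fin r, (∑ i, U i a * U i a) = norm2 (colU U a) ^ 2 := by
    intro a
    rw [hsq a]
    exact Finset.sum_congr rfl fun i _ => (sq (U i a)).symm
  have hGll : G l l = norm2 (colU U l) ^ 4 := by
    rw [hGram, hsq']; ring
  have hGoff : ∀ a : Fin r, a ≠ l →
      |G a l| ≤ μ / d * (norm2 (colU U a) ^ 2 * norm2 (colU U l) ^ 2) := by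
    intro a ha
    rw [hGram]
    have h1 := hInc.2.2 a l ha
    rw [abs_pow]
    calc |∑ i, U i a * U i l| ^ 2
        ≤ (Real.sqrt (μ / d) * (norm2 (colU U a) * norm2 (colU U l))) ^ 2 :=
          pow_le_pow_left₀ (abs_nonneg _) h1 2
      _ = μ / d * (norm2 (colU U a) ^ 2 * norm2 (colU U l) ^ 2) := by
          rw [mul_pow, Real.sq_sqrt hμd]; ring
  -- inverse facts
  have hGGi : G * Gi = 1 := Matrix.mul_nonsing_inv _ hdet
  have hGiG : Gi * G = 1 := Matrix.nonsing_inv_mul _ hdet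
  -- key spectral bounds
  have key : ∀ y : Fin r → ℝ,
      Real.sqrt (∑ a, (Gi.mulVec y) a ^ 2) ≤ 4 / L ^ 2 * Real.sqrt (∑ a, y a ^ 2) ∧
      Real.sqrt (∑ ij : Fin d × Fin d, (A.mulVec (Gi.mulVec y)) ij ^ 2) ≤
        2 / L * Real.sqrt (∑ a, y a ^ 2) := by
    intro y
    set x := Gi.mulVec y with hx
    have hGx : G.mulVec x = y := by
      rw [hx, Matrix.mulVec_mulVec, hGGi, Matrix.one_mulVec]
    have hQ : ∑ ij : Fin d × Fin d, (A.mulVec x) ij ^ 2 = ∑ a, x a * y a := by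
      rw [tc_sum_mulVec_sq]
      rw [show Aᵀ * A = G from rfl, hGx]
    have hσx := hσ x
    set X := Real.sqrt (∑ a, x a ^ 2) with hX
    set Y := Real.sqrt (∑ a, y a ^ 2) with hY
    have hX0 : 0 ≤ X := Real.sqrt_nonneg _
    have hY0 : 0 ≤ Y := Real.sqrt_nonneg _
    have hXsq : X ^ 2 = ∑ a, x a ^ 2 := Real.sq_sqrt (by positivity)
    have hYsq : Y ^ 2 = ∑ a, y a ^ 2 := Real.sq_sqrt (by positivity)
    have hCS : ∑ a, x a * y a ≤ X * Y := by
      have h := Real.sum_mul_le_sqrt_mul_sqrt Finset.univ x y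
      rwa [← hX, ← hY] at h
    have h1 : (L / 2) ^ 2 * X ^ 2 ≤ X * Y := by
      rw [hXsq]
      calc (L / 2) ^ 2 * ∑ a, x a ^ 2 ≤ ∑ ij : Fin d × Fin d, (A.mulVec x) ij ^ 2 := hσx
        _ = ∑ a, x a * y a := hQ
        _ ≤ X * Y := hCS
    have hXle : X ≤ 4 / L ^ 2 * Y := by
      rcases eq_or_lt_of_le hX0 with h | h
      · rw [← h]; positivity
      · rw [div_mul_eq_mul_div, le_div_iff₀ (by positivity : (0:ℝ) < L ^ 2)]
        nlinarith [h1, h]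
    refine ⟨hXle, ?_⟩
    have hQle : ∑ ij : Fin d × Fin d, (A.mulVec x) ij ^ 2 ≤ (2 / L * Y) ^ 2 := by
      rw [hQ]
      have h2 : X * Y ≤ (4 / L ^ 2 * Y) * Y := mul_le_mul_of_nonneg_right hXle hY0
      have h3 : (4 / L ^ 2 * Y) * Y = (2 / L * Y) ^ 2 := by field_simp; ring
      calc ∑ a, x a * y a ≤ X * Y := hCS
        _ ≤ (4 / L ^ 2 * Y) * Y := h2
        _ = (2 / L * Y) ^ 2 := h3
    calc Real.sqrt (∑ ij : Fin d × Fin d, (A.mulVec x) ij ^ 2)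
        ≤ Real.sqrt ((2 / L * Y) ^ 2) := Real.sqrt_le_sqrt hQle
      _ = 2 / L * Y := Real.sqrt_sq (by positivity)
  -- the vector w and el
  set nl := norm2 (colU U l) ^ 4 with hnldef
  have hnl_pos : 0 < nl := pow_pos (hnpos l) 4
  set el : Fin r → ℝ := Pi.single l 1 with heldef
  have hel_sum : ∑ a, el a ^ 2 = 1 := by
    simp [heldef, Pi.single_apply]
  have hw : Gi.mulVec el = fun a => Gi a l := by
    funext a
    simp [Matrix.mulVec, dotProduct, heldef, Pi.single_apply, mul_ite]
  set δ : Fin r → ℝ := fun a => Gi a l - nl⁻¹ * el a with hδdef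
  have hTδ : ∀ ij : Fin d × Fin d, Vmat U ij l - nl⁻¹ * A ij l = A.mulVec δ ij := by
    intro ij
    have hV : Vmat U ij l = ∑ a, A ij a * Gi a l := by
      rw [Vmat, Matrix.mul_apply]
    rw [hV]
    simp only [Matrix.mulVec, dotProduct, hδdef, mul_sub, Finset.sum_sub_distrib]
    congr 1
    simp [heldef, Pi.single_apply, mul_ite, mul_comm]
  set y : Fin r → ℝ := G.mulVec δ with hydef
  have hδy : Gi.mulVec y = δ := by
    rw [hydef, Matrix.mulVec_mulVec, hGiG, Matrix.one_mulVec]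
  have hyval : ∀ a, y a = el a - nl⁻¹ * G a l := by
    intro a
    rw [hydef]
    simp only [Matrix.mulVec, dotProduct, hδdef, mul_sub, Finset.sum_sub_distrib]
    congr 1
    · have h := congrFun (congrFun hGGi a) l
      rw [Matrix.mul_apply] at h
      rw [h, Matrix.one_apply, heldef, Pi.single_apply]
    · simp [heldef, Pi.single_apply, mul_ite, mul_comm, mul_left_comm]
  have hAapply : ∀ (ij : Fin d × Fin d) (a : Fin r), A ij a = U ij.1 a * U ij.2 a :=
    fun ij a => rfl
  have hVapply : ∀ ij : Fin d × Fin d, Vmat U ij l = ∑ a, A ij a * Gi a l := by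
    intro ij
    rw [Vmat, Matrix.mul_apply]
  clear_value y δ el nl Gi G A L lam
  have hybound : ∀ a, |y a| ≤ K * μ / d := by
    intro a
    rw [hyval a]
    by_cases hal : a = l
    · subst hal
      rw [heldef, Pi.single_eq_same, hGll, inv_mul_cancel₀ hnl_pos.ne']
      simp only [sub_self, abs_zero]
      positivity
    · rw [heldef, Pi.single_eq_of_ne hal, zero_sub, abs_neg, abs_mul, abs_of_pos (by positivity :
        (0:ℝ) < nl⁻¹)]
      have h1 := hGoff a hal
      have h2 : nl⁻¹ * |G a l| ≤ nl⁻¹ * (μ / d * (norm2 (colU U a) ^ 2 * norm2 (colU U l) ^ 2)) :=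
        mul_le_mul_of_nonneg_left h1 (by positivity)
      refine h2.trans ?_
      have hPpos : 0 < norm2 (colU U l) ^ 2 := pow_pos (hnpos l) 2
      have hQKP : norm2 (colU U a) ^ 2 ≤ K * norm2 (colU U l) ^ 2 :=
        (hKL a).trans (mul_le_mul_of_nonneg_left (hL_le l) hK0.le)
      rw [hnldef, show norm2 (colU U l) ^ 4 = (norm2 (colU U l) ^ 2) ^ 2 by ring,
        inv_mul_le_iff₀ (pow_pos (pow_pos (hnpos l) 2) 2)]
      calc μ / ↑d * (norm2 (colU U a) ^ 2 * norm2 (colU U l) ^ 2)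
          ≤ μ / ↑d * (K * norm2 (colU U l) ^ 2 * norm2 (colU U l) ^ 2) := by
            refine mul_le_mul_of_nonneg_left ?_ hμd
            exact mul_le_mul_of_nonneg_right hQKP hPpos.le
        _ = (norm2 (colU U l) ^ 2) ^ 2 * (K * μ / ↑d) := by ring
  have hy2 : Real.sqrt (∑ a, y a ^ 2) ≤ Real.sqrt r * (K * μ / d) := by
    have hb : ∑ a, y a ^ 2 ≤ ∑ _a : Fin r, (K * μ / d) ^ 2 := by
      refine Finset.sum_le_sum fun a _ => ?_
      calc y a ^ 2 = |y a| ^ 2 := (sq_abs _).symm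
        _ ≤ (K * μ / d) ^ 2 := pow_le_pow_left₀ (abs_nonneg _) (hybound a) 2
    have hb2 : ∑ _a : Fin r, (K * μ / d) ^ 2 = r * (K * μ / d) ^ 2 := by
      rw [Finset.sum_const, Finset.card_univ, Fintype.card_fin, nsmul_eq_mul]
    calc Real.sqrt (∑ a, y a ^ 2) ≤ Real.sqrt (r * (K * μ / d) ^ 2) := by
          rw [← hb2]; exact Real.sqrt_le_sqrt hb
      _ = Real.sqrt r * (K * μ / d) := by
          have h1 : (0:ℝ) ≤ (r:ℝ) := by positivity
          have h2 : (0:ℝ) ≤ K * μ / (d:ℝ) := by positivity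
          rw [Real.sqrt_mul h1 ((K * μ / (d:ℝ)) ^ 2), Real.sqrt_sq h2]
  have hsr : Real.sqrt r ≤ (r:ℝ) := by
    rw [Real.sqrt_le_left (by positivity)]
    nlinarith
  have hsr0 : (0:ℝ) ≤ Real.sqrt r := Real.sqrt_nonneg _
  -- part (i)
  have part1 : Real.sqrt (∑ ij : Fin d × Fin d, (Vmat U ij l - nl⁻¹ * A ij l) ^ 2) ≤
      16 * K ^ 2 * μ * r / (d * L) := by
    have h2 := (key y).2
    rw [hδy] at h2
    have heq : ∑ ij : Fin d × Fin d, (Vmat U ij l - nl⁻¹ * A ij l) ^ 2 =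
        ∑ ij : Fin d × Fin d, (A.mulVec δ ij) ^ 2 :=
      Finset.sum_congr rfl fun ij _ => by rw [hTδ]
    rw [heq]
    refine h2.trans ?_
    have step1 : 2 / L * Real.sqrt (∑ a, y a ^ 2) ≤ 2 / L * (Real.sqrt r * (K * μ / d)) :=
      mul_le_mul_of_nonneg_left hy2 (by positivity)
    refine step1.trans ?_
    have heq2 : 2 / L * (Real.sqrt r * (K * μ / d)) = 2 * K * μ * Real.sqrt r / (d * L) := by
      field_simp
    rw [heq2]
    have hnum : 2 * K * μ * Real.sqrt r ≤ 16 * K ^ 2 * μ * r := by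
      have h1 : 2 * K * μ * Real.sqrt r ≤ 2 * K * μ * r :=
        mul_le_mul_of_nonneg_left hsr (by positivity)
      refine h1.trans ?_
      have hr0 : (0:ℝ) < r := lt_of_lt_of_le one_pos hr1
      nlinarith [mul_nonneg (mul_nonneg (mul_nonneg hK0.le hμ.le) hr0.le)
        (by linarith : (0:ℝ) ≤ 8 * K - 1), hK0, hμ, hr0]
    exact (div_le_div_iff_of_pos_right (mul_pos hd hL)).mpr hnum
  -- part (i.b)
  have hP : (0:ℝ) < norm2 (colU U l) ^ 2 := pow_pos (hnpos l) 2
  have hAl : ∑ ij : Fin d × Fin d, (A ij l) ^ 2 = (norm2 (colU U l) ^ 2) ^ 2 := by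
    rw [Fintype.sum_prod_type]
    have h1 : ∀ i j : Fin d, (A (i, j) l) ^ 2 = U i l ^ 2 * U j l ^ 2 := by
      intro i j; rw [hAapply]; ring
    simp_rw [h1]
    rw [← Finset.sum_mul_sum, ← hsq l]
    ring
  have hWnorm : Real.sqrt (∑ ij : Fin d × Fin d, (nl⁻¹ * A ij l) ^ 2) =
      (norm2 (colU U l) ^ 2)⁻¹ := by
    have h1 : ∑ ij : Fin d × Fin d, (nl⁻¹ * A ij l) ^ 2 = ((norm2 (colU U l) ^ 2)⁻¹) ^ 2 := by
      simp_rw [mul_pow]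
      rw [← Finset.mul_sum, hAl, hnldef]
      field_simp [(hnpos l).ne']
    rw [h1, Real.sqrt_sq (inv_nonneg.mpr hP.le)]
  have part2 : |Real.sqrt (∑ ij : Fin d × Fin d, Vmat U ij l ^ 2) -
      (norm2 (colU U l) ^ 2)⁻¹| ≤ 16 * K ^ 2 * μ * r / (d * L) := by
    have htri := tc_revTri (n := Fin d × Fin d)
      (WithLp.toLp 2 fun ij => Vmat U ij l) (WithLp.toLp 2 fun ij => nl⁻¹ * A ij l)
    simp only [PiLp.toLp_apply] at htri
    rw [hWnorm] at htri
    exact htri.trans part1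
  -- part (ii)
  have hAbound : ∀ (ij : Fin d × Fin d) (a : Fin r), |A ij a| ≤ μ / d * (K * L) := by
    intro ij a
    rw [hAapply, abs_mul]
    calc |U ij.1 a| * |U ij.2 a|
        ≤ (Real.sqrt (μ/d) * norm2 (colU U a)) * (Real.sqrt (μ/d) * norm2 (colU U a)) :=
          mul_le_mul (hentry a ij.1) (hentry a ij.2) (abs_nonneg _)
            (mul_nonneg (Real.sqrt_nonneg _) (hn0 a))
      _ = μ / d * norm2 (colU U a) ^ 2 := by
          rw [mul_mul_mul_comm, Real.mul_self_sqrt hμd, ← sq]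
      _ ≤ μ / d * (K * L) := mul_le_mul_of_nonneg_left (hKL a) hμd
  have hwnorm : Real.sqrt (∑ a, Gi a l ^ 2) ≤ 4 / L ^ 2 := by
    have h1 := (key el).1
    simp only [hw] at h1
    rwa [hel_sum, Real.sqrt_one, mul_one] at h1
  have habs : ∑ a, |Gi a l| ≤ Real.sqrt r * (4 / L ^ 2) := by
    have hCS := Real.sum_mul_le_sqrt_mul_sqrt Finset.univ
      (fun _ : Fin r => (1:ℝ)) (fun a => |Gi a l|)
    simp only [one_mul, one_pow, sq_abs] at hCS
    have hc : ∑ _a : Fin r, (1:ℝ) = (r:ℝ) := by simp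
    rw [hc] at hCS
    exact hCS.trans (mul_le_mul_of_nonneg_left hwnorm (Real.sqrt_nonneg _))
  have hVbound : ∀ ij : Fin d × Fin d,
      |Vmat U ij l| ≤ μ / d * (K * L) * (Real.sqrt r * (4 / L ^ 2)) := by
    intro ij
    rw [hVapply ij]
    calc |∑ a, A ij a * Gi a l| ≤ ∑ a, |A ij a * Gi a l| := Finset.abs_sum_le_sum_abs _ _
      _ ≤ ∑ a, μ / d * (K * L) * |Gi a l| := Finset.sum_le_sum fun a _ => by
          rw [abs_mul]; exact mul_le_mul_of_nonneg_right (hAbound ij a) (abs_nonneg _)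
      _ = μ / d * (K * L) * ∑ a, |Gi a l| := by rw [Finset.mul_sum]
      _ ≤ _ := mul_le_mul_of_nonneg_left habs
          (mul_nonneg hμd (mul_nonneg hK0.le hL.le))
  have part3 : (⨆ ij : Fin d × Fin d, |Vmat U ij l|) ≤
      16 * K ^ 2 * μ * Real.sqrt r / (d * L) := by
    refine ciSup_le fun ij => (hVbound ij).trans ?_
    have heq3 : μ / d * (K * L) * (Real.sqrt r * (4 / L ^ 2)) =
        4 * K * μ * Real.sqrt r / (d * L) := by
      field_simp
    rw [heq3]
    have hnum : 4 * K * μ * Real.sqrt r ≤ 16 * K ^ 2 * μ * Real.sqrt r := by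
      nlinarith [mul_nonneg (mul_nonneg (mul_nonneg hK0.le hμ.le) hsr0)
        (by linarith : (0:ℝ) ≤ 4 * K - 1), hK0, hμ, hsr0]
    exact (div_le_div_iff_of_pos_right (mul_pos hd hL)).mpr hnum
  refine ⟨part1, part2, part3, ?_⟩
  -- part (iii)
  intro i
  have hVik : ∀ k, Vmat U (i, k) l = ∑ a, (U i a * Gi a l) * U k a := by
    intro k
    rw [hVapply (i, k)]
    exact Finset.sum_congr rfl fun a _ => by rw [hAapply]; ring
  have hMink := tc_sqrtMink (n := Fin d) (ι := Fin r)
    (fun a => WithLp.toLp 2 fun k => (U i a * Gi a l) * U k a)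
  simp only [PiLp.toLp_apply] at hMink
  have hFa : ∀ a, Real.sqrt (∑ k, ((U i a * Gi a l) * U k a) ^ 2) =
      |U i a * Gi a l| * norm2 (colU U a) := by
    intro a
    have h1 : ∑ k, ((U i a * Gi a l) * U k a) ^ 2 = (U i a * Gi a l) ^ 2 * ∑ k, U k a ^ 2 := by
      rw [Finset.mul_sum]; exact Finset.sum_congr rfl fun k _ => by ring
    rw [h1, Real.sqrt_mul (sq_nonneg _), Real.sqrt_sq_eq_abs, ← hsq a, Real.sqrt_sq (hn0 a)]
  have hsum3 : ∑ a, |U i a * Gi a l| * norm2 (colU U a) ≤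
      Real.sqrt (μ/d) * (K * L) * (Real.sqrt r * (4 / L ^ 2)) := by
    have hterm : ∀ a : Fin r, |U i a * Gi a l| * norm2 (colU U a) ≤
        Real.sqrt (μ/d) * (K * L) * |Gi a l| := by
      intro a
      rw [abs_mul]
      calc |U i a| * |Gi a l| * norm2 (colU U a)
          = |U i a| * norm2 (colU U a) * |Gi a l| := by ring
        _ ≤ (Real.sqrt (μ/d) * norm2 (colU U a)) * norm2 (colU U a) * |Gi a l| :=
            mul_le_mul_of_nonneg_right
              (mul_le_mul_of_nonneg_right (hentry a i) (hn0 a)) (abs_nonneg _)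
        _ = Real.sqrt (μ/d) * norm2 (colU U a) ^ 2 * |Gi a l| := by ring
        _ ≤ Real.sqrt (μ/d) * (K * L) * |Gi a l| :=
            mul_le_mul_of_nonneg_right
              (mul_le_mul_of_nonneg_left (hKL a) (Real.sqrt_nonneg _)) (abs_nonneg _)
    calc ∑ a, |U i a * Gi a l| * norm2 (colU U a)
        ≤ ∑ a, Real.sqrt (μ/d) * (K * L) * |Gi a l| := Finset.sum_le_sum fun a _ => hterm a
      _ = Real.sqrt (μ/d) * (K * L) * ∑ a, |Gi a l| := by rw [Finset.mul_sum]
      _ ≤ _ := mul_le_mul_of_nonneg_left habs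
          (mul_nonneg (Real.sqrt_nonneg _) (mul_nonneg hK0.le hL.le))
  have hfin : Real.sqrt (∑ k, Vmat U (i, k) l ^ 2) ≤
      Real.sqrt (μ/d) * (K * L) * (Real.sqrt r * (4 / L ^ 2)) := by
    have heqs : ∑ k, Vmat U (i, k) l ^ 2 = ∑ k, (∑ a, (U i a * Gi a l) * U k a) ^ 2 :=
      Finset.sum_congr rfl fun k _ => by rw [hVik]
    rw [heqs]
    refine hMink.trans ?_
    calc ∑ a, Real.sqrt (∑ k, ((U i a * Gi a l) * U k a) ^ 2)
        = ∑ a, |U i a * Gi a l| * norm2 (colU U a) := Finset.sum_congr rfl fun a _ => hFa a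
      _ ≤ _ := hsum3
  have hL43 : lam ^ ((4:ℝ)/3) = L ^ 2 := by
    rw [hLdef, ← Real.rpow_natCast (lam ^ ((2:ℝ)/3)) 2, ← Real.rpow_mul hlam.le]
    norm_num
  rw [hL43]
  have hB : (Real.sqrt (μ/d) * (K * L) * (Real.sqrt r * (4 / L ^ 2))) ^ 2 =
      16 * K ^ 2 * μ * r / (d * L ^ 2) := by
    rw [mul_pow, mul_pow, mul_pow, mul_pow, div_pow, Real.sq_sqrt hμd,
      Real.sq_sqrt (by positivity : (0:ℝ) ≤ (r:ℝ))]
    field_simp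
    ring
  calc ∑ k, Vmat U (i, k) l ^ 2
      = Real.sqrt (∑ k, Vmat U (i, k) l ^ 2) ^ 2 :=
        (Real.sq_sqrt (Finset.sum_nonneg fun k _ => sq_nonneg _)).symm
    _ ≤ (Real.sqrt (μ/d) * (K * L) * (Real.sqrt r * (4 / L ^ 2))) ^ 2 :=
        pow_le_pow_left₀ (Real.sqrt_nonneg _) hfin 2
    _ = 16 * K ^ 2 * μ * r / (d * L ^ 2) := hB


end TC
end
end

section
/- For every K ≥ 1 there is a constant C = C(K) > 0 with the following property. Suppose U⋆ is μ-incoherent, κ ≤ K, Ũ⋆ᵀŨ⋆ is invertible, and σ_r(Ũ⋆) ≥ λ_min^{⋆2/3}/2. Let P⋆ := Ũ⋆ (Ũ⋆ᵀŨ⋆)⁻¹ Ũ⋆ᵀ ∈ ℝ^{d²×d²}. Then for every 1 ≤ i, j ≤ d, the ((i−1)d+j)-th row of P⋆ satisfies ‖P⋆_{(i,j),:}‖₂ ≤ C·λ_min^{⋆−2/3}·‖Ũ⋆_{(i,j),:}‖₂ and ‖P⋆_{(i,j),:}‖_∞ ≤ C·(μ √r/d)·λ_min^{⋆−2/3}·‖Ũ⋆_{(i,j),:}‖₂.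 -/
noncomputable section

open MeasureTheory ProbabilityTheory Matrix

namespace TC

/-- Cauchy–Schwarz, absolute-value form. -/
private lemma cs_abs' {n : Type*} [Fintype n] (f g : n → ℝ) :
    |∑ i, f i * g i| ≤ Real.sqrt (∑ i, f i ^ 2) * Real.sqrt (∑ i, g i ^ 2) := by
  rw [← Real.sqrt_sq_eq_abs, ← Real.sqrt_mul (by positivity)]
  exact Real.sqrt_le_sqrt (Finset.sum_mul_sq_le_sq_mul_sq _ f g)

private lemma sum_sq_swap' {d r : ℕ} (L : Matrix (Fin d × Fin d) (Fin r) ℝ) (y : Fin r → ℝ) :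
    ∑ kl : Fin d × Fin d, (∑ b, L kl b * y b) ^ 2
      = ∑ a, ∑ b, (y a * y b) * ∑ kl : Fin d × Fin d, L kl a * L kl b := by
  simp_rw [pow_two, Finset.sum_mul_sum, Finset.mul_sum]
  rw [Finset.sum_comm]
  refine Finset.sum_congr rfl fun a _ => ?_
  rw [Finset.sum_comm]
  exact Finset.sum_congr rfl fun b _ => Finset.sum_congr rfl fun kl _ => by ring

/-- row norms of the projection-type matrix `P⋆ = Ũ (ŨᵀŨ)⁻¹ Ũᵀ`. -/
theorem statement15 :
    ∀ K : ℝ, 1 ≤ K → ∃ C > (0 : ℝ),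
      ∀ (d r : ℕ) (μ : ℝ) (U : Matrix (Fin d) (Fin r) ℝ),
        Incoherent μ U → 0 < lamMin U → lamMax U ≤ K * lamMin U →
        IsUnit (gram U).det →
        (∀ x : Fin r → ℝ,
          (lamMin U ^ ((2 : ℝ) / 3) / 2) ^ 2 * ∑ l, x l ^ 2 ≤
            ∑ ij : Fin d × Fin d, (lift U).mulVec x ij ^ 2) →
        ∀ i j : Fin d,
          norm2 (fun kl : Fin d × Fin d => Pmat U (i, j) kl) ≤
            C * (lamMin U ^ ((2 : ℝ) / 3))⁻¹ * norm2 (fun l => lift U (i, j) l) ∧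
          (⨆ kl : Fin d × Fin d, |Pmat U (i, j) kl|) ≤
            C * (μ * Real.sqrt r / d) * (lamMin U ^ ((2 : ℝ) / 3))⁻¹ *
              norm2 (fun l => lift U (i, j) l) := by
  classical
  intro K hK
  refine ⟨4 * K, by linarith, ?_⟩
  intro d r μ U hInc hlam hKb hdet hsig i j
  set lp : ℝ := lamMin U ^ ((2 : ℝ) / 3) with hlp
  have hlp0 : 0 < lp := Real.rpow_pos_of_pos hlam _
  have hK0 : (0 : ℝ) < K := lt_of_lt_of_le one_pos hK
  have hdprod : Nonempty (Fin d × Fin d) := ⟨(i, j)⟩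
  have hdpos : (0 : ℝ) < d := by exact_mod_cast i.pos
  have hdne : (d : ℝ) ≠ 0 := ne_of_gt hdpos
  have hr : Nonempty (Fin r) := by
    by_contra h
    rw [not_nonempty_iff] at h
    have h0 : lamMin U = 0 := Real.iInf_of_isEmpty _
    rw [h0] at hlam; exact lt_irrefl _ hlam
  have hrpos : (0 : ℝ) < r := by
    obtain ⟨a⟩ := hr; exact_mod_cast a.pos
  -- μ / d is nonnegative
  have hμd : (0 : ℝ) ≤ μ / d := by
    by_contra h
    push_neg at h
    have hs0 : Real.sqrt (μ / d) = 0 := Real.sqrt_eq_zero_of_nonpos h.le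
    have hU0 : ∀ (k : Fin d) (a : Fin r), U k a = 0 := by
      intro k a
      have h1 : |U k a| ≤ normInf (colU U a) :=
        le_ciSup (Finite.bddAbove_range fun m => |colU U a m|) k
      have h2 := hInc.2.1 a
      rw [hs0, zero_mul] at h2
      exact abs_eq_zero.mp (le_antisymm (h1.trans h2) (abs_nonneg _))
    have hc := hsig fun _ => 1
    have hL : ∑ ij : Fin d × Fin d, (lift U).mulVec (fun _ => (1 : ℝ)) ij ^ 2 = 0 := by
      refine Finset.sum_eq_zero fun ij _ => ?_
      have h5 : (lift U).mulVec (fun _ => (1 : ℝ)) ij = 0 := by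
        simp [Matrix.mulVec, dotProduct, lift, hU0]
      rw [h5]; ring
    rw [hL] at hc
    have h1 : ∑ l : Fin r, (1 : ℝ) ^ 2 = r := by simp
    rw [h1] at hc
    nlinarith [mul_pos (pow_pos (half_pos hlp0) 2) hrpos]
  -- the key vector y and its properties
  set y : Fin r → ℝ := (gram U)⁻¹.mulVec (fun l => lift U (i, j) l) with hy
  have hGyx : ∀ a, (gram U).mulVec y a = lift U (i, j) a := by
    intro a
    rw [hy, Matrix.mulVec_mulVec, Matrix.mul_nonsing_inv _ hdet, Matrix.one_mulVec]
  have hGsymm : ∀ a b, (gram U)⁻¹ a b = (gram U)⁻¹ b a := by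
    intro a b
    have h1 : (gram U)ᵀ = gram U := by
      simp [gram, Matrix.transpose_mul]
    have h2 : ((gram U)⁻¹)ᵀ = (gram U)⁻¹ := by
      rw [Matrix.transpose_nonsing_inv, h1]
    conv_lhs => rw [← h2]
    exact Matrix.transpose_apply _ a b
  have hGram : ∀ a b, gram U a b = ∑ kl : Fin d × Fin d, lift U kl a * lift U kl b := by
    intro a b
    simp [gram, Matrix.mul_apply, Matrix.transpose_apply]
  -- the row of P
  have hProw : ∀ kl : Fin d × Fin d, Pmat U (i, j) kl = ∑ b, lift U kl b * y b := by
    intro kl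
    simp only [Pmat, Matrix.mul_apply, Matrix.transpose_apply]
    refine Finset.sum_congr rfl fun b _ => ?_
    have hyb : y b = ∑ a, (gram U)⁻¹ a b * lift U (i, j) a := by
      rw [hy]
      simp only [Matrix.mulVec, dotProduct]
      exact Finset.sum_congr rfl fun a _ => by rw [hGsymm b a]
    rw [hyb, Finset.sum_mul, Finset.mul_sum]
    exact Finset.sum_congr rfl fun a _ => by ring
  -- the quadratic identity
  have hquad : ∑ kl : Fin d × Fin d, (∑ b, lift U kl b * y b) ^ 2
      = ∑ a, y a * lift U (i, j) a := by
    rw [sum_sq_swap' (lift U) y]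
    refine Finset.sum_congr rfl fun a _ => ?_
    have h2 : ∑ b, (y a * y b) * gram U a b = y a * (gram U).mulVec y a := by
      simp only [Matrix.mulVec, dotProduct, Finset.mul_sum]
      exact Finset.sum_congr rfl fun b _ => by ring
    calc ∑ b, (y a * y b) * ∑ kl : Fin d × Fin d, lift U kl a * lift U kl b
        = ∑ b, (y a * y b) * gram U a b :=
          Finset.sum_congr rfl fun b _ => by rw [← hGram a b]
      _ = y a * (gram U).mulVec y a := h2
      _ = y a * lift U (i, j) a := by rw [hGyx a]
  -- norms
  have hnx0 : 0 ≤ norm2 (fun l => lift U (i, j) l) := Real.sqrt_nonneg _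
  have hny0 : 0 ≤ Real.sqrt (∑ a, y a ^ 2) := Real.sqrt_nonneg _
  have hny_sq : Real.sqrt (∑ a, y a ^ 2) ^ 2 = ∑ a, y a ^ 2 :=
    Real.sq_sqrt (by positivity)
  have hS0 : 0 ≤ ∑ a, y a * lift U (i, j) a := by
    rw [← hquad]; exact Finset.sum_nonneg fun kl _ => sq_nonneg _
  have hS_ub : ∑ a, y a * lift U (i, j) a
      ≤ Real.sqrt (∑ a, y a ^ 2) * norm2 (fun l => lift U (i, j) l) := by
    calc ∑ a, y a * lift U (i, j) a ≤ |∑ a, y a * lift U (i, j) a| := le_abs_self _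
      _ ≤ Real.sqrt (∑ a, y a ^ 2) * Real.sqrt (∑ a, lift U (i, j) a ^ 2) := cs_abs' _ _
      _ = Real.sqrt (∑ a, y a ^ 2) * norm2 (fun l => lift U (i, j) l) := by rw [norm2]
  have hS_lb : (lp / 2) ^ 2 * ∑ a, y a ^ 2 ≤ ∑ a, y a * lift U (i, j) a := by
    have hc := hsig y
    have hrhs : ∑ ij : Fin d × Fin d, (lift U).mulVec y ij ^ 2
        = ∑ a, y a * lift U (i, j) a := by
      rw [← hquad]
      refine Finset.sum_congr rfl fun kl _ => ?_
      simp only [Matrix.mulVec, dotProduct]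
    rw [hrhs] at hc
    exact hc
  have hny_le : Real.sqrt (∑ a, y a ^ 2)
      ≤ norm2 (fun l => lift U (i, j) l) / (lp / 2) ^ 2 := by
    rcases eq_or_lt_of_le hny0 with h | h
    · rw [← h]; positivity
    · rw [le_div_iff₀ (by positivity)]
      have h1 := hS_lb.trans hS_ub
      rw [← hny_sq] at h1
      nlinarith
  -- Goal 1
  have hPnorm : norm2 (fun kl : Fin d × Fin d => Pmat U (i, j) kl)
      = Real.sqrt (∑ a, y a * lift U (i, j) a) := by
    rw [norm2, ← hquad]
    congr 1
    exact Finset.sum_congr rfl fun kl _ => by rw [hProw kl]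
  have hgoal1 : norm2 (fun kl : Fin d × Fin d => Pmat U (i, j) kl)
      ≤ 4 * K * lp⁻¹ * norm2 (fun l => lift U (i, j) l) := by
    have hSle : ∑ a, y a * lift U (i, j) a
        ≤ (2 * norm2 (fun l => lift U (i, j) l) / lp) ^ 2 := by
      have h1 : norm2 (fun l => lift U (i, j) l) / (lp / 2) ^ 2
            * norm2 (fun l => lift U (i, j) l)
          = (2 * norm2 (fun l => lift U (i, j) l) / lp) ^ 2 := by
        field_simp
      calc ∑ a, y a * lift U (i, j) a
          ≤ Real.sqrt (∑ a, y a ^ 2) * norm2 (fun l => lift U (i, j) l) := hS_ub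
        _ ≤ norm2 (fun l => lift U (i, j) l) / (lp / 2) ^ 2
            * norm2 (fun l => lift U (i, j) l) :=
            mul_le_mul_of_nonneg_right hny_le hnx0
        _ = (2 * norm2 (fun l => lift U (i, j) l) / lp) ^ 2 := h1
    calc norm2 (fun kl : Fin d × Fin d => Pmat U (i, j) kl)
        = Real.sqrt (∑ a, y a * lift U (i, j) a) := hPnorm
      _ ≤ Real.sqrt ((2 * norm2 (fun l => lift U (i, j) l) / lp) ^ 2) :=
          Real.sqrt_le_sqrt hSle
      _ = 2 * norm2 (fun l => lift U (i, j) l) / lp := Real.sqrt_sq (by positivity)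
      _ ≤ 4 * K * lp⁻¹ * norm2 (fun l => lift U (i, j) l) := by
          rw [div_eq_mul_inv]
          nlinarith [mul_nonneg (mul_nonneg hnx0 (inv_nonneg.mpr hlp0.le))
            (sub_nonneg.mpr hK), mul_nonneg hnx0 (inv_nonneg.mpr hlp0.le)]
  -- entrywise bound on lift
  have hlift_bd : ∀ (kl : Fin d × Fin d) (a : Fin r),
      |lift U kl a| ≤ μ / d * (K * lp) := by
    intro kl a
    have hcol : ∀ m : Fin d, |U m a| ≤ Real.sqrt (μ / d) * norm2 (colU U a) := fun m =>
      le_trans (le_ciSup (Finite.bddAbove_range fun m' => |colU U a m'|) m) (hInc.2.1 a)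
    have hn0 : 0 ≤ norm2 (colU U a) := Real.sqrt_nonneg _
    have h3 : norm2 (colU U a) ^ 3 ≤ K * lamMin U :=
      le_trans (le_ciSup (Finite.bddAbove_range fun l => norm2 (colU U l) ^ 3) a) hKb
    have hn2eq : ((norm2 (colU U a) ^ 3 : ℝ)) ^ ((2 : ℝ) / 3) = norm2 (colU U a) ^ 2 := by
      rw [← Real.rpow_natCast (norm2 (colU U a)) 3, ← Real.rpow_mul hn0,
        ← Real.rpow_natCast (norm2 (colU U a)) 2]
      norm_num
    have hsqle : norm2 (colU U a) ^ 2 ≤ K * lp := by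
      calc norm2 (colU U a) ^ 2
          = ((norm2 (colU U a) ^ 3 : ℝ)) ^ ((2 : ℝ) / 3) := hn2eq.symm
        _ ≤ (K * lamMin U) ^ ((2 : ℝ) / 3) :=
            Real.rpow_le_rpow (by positivity) h3 (by norm_num)
        _ = K ^ ((2 : ℝ) / 3) * lp := by
            rw [hlp, ← Real.mul_rpow hK0.le hlam.le]
        _ ≤ K * lp := by
            have h6 : K ^ ((2 : ℝ) / 3) ≤ K := by
              calc K ^ ((2 : ℝ) / 3) ≤ K ^ (1 : ℝ) :=
                    Real.rpow_le_rpow_of_exponent_le hK (by norm_num)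
                _ = K := Real.rpow_one K
            exact mul_le_mul_of_nonneg_right h6 hlp0.le
    have h4 : |lift U kl a| = |U kl.1 a| * |U kl.2 a| := by
      rw [lift]; exact abs_mul _ _
    calc |lift U kl a| = |U kl.1 a| * |U kl.2 a| := h4
      _ ≤ (Real.sqrt (μ / d) * norm2 (colU U a)) * (Real.sqrt (μ / d) * norm2 (colU U a)) :=
          mul_le_mul (hcol kl.1) (hcol kl.2) (abs_nonneg _) (by positivity)
      _ = μ / d * norm2 (colU U a) ^ 2 := by
          rw [show (Real.sqrt (μ / d) * norm2 (colU U a))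
              * (Real.sqrt (μ / d) * norm2 (colU U a))
            = (Real.sqrt (μ / d) * Real.sqrt (μ / d))
              * (norm2 (colU U a) * norm2 (colU U a)) from by ring,
            Real.mul_self_sqrt hμd, ← pow_two]
      _ ≤ μ / d * (K * lp) := mul_le_mul_of_nonneg_left hsqle hμd
  -- Goal 2
  have hgoal2 : (⨆ kl : Fin d × Fin d, |Pmat U (i, j) kl|)
      ≤ 4 * K * (μ * Real.sqrt r / d) * lp⁻¹ * norm2 (fun l => lift U (i, j) l) := by
    refine ciSup_le fun kl => ?_
    rw [hProw kl]
    have hrow_bd : Real.sqrt (∑ b, lift U kl b ^ 2)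
        ≤ Real.sqrt r * (μ / d * (K * lp)) := by
      have h1 : ∑ b, lift U kl b ^ 2 ≤ (r : ℝ) * (μ / d * (K * lp)) ^ 2 := by
        calc ∑ b, lift U kl b ^ 2 ≤ ∑ _b : Fin r, (μ / d * (K * lp)) ^ 2 := by
              refine Finset.sum_le_sum fun b _ => ?_
              rw [← sq_abs (lift U kl b)]
              exact pow_le_pow_left₀ (abs_nonneg _) (hlift_bd kl b) 2
          _ = (r : ℝ) * (μ / d * (K * lp)) ^ 2 := by
              rw [Finset.sum_const, Finset.card_univ, Fintype.card_fin, nsmul_eq_mul]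
      calc Real.sqrt (∑ b, lift U kl b ^ 2)
          ≤ Real.sqrt ((r : ℝ) * (μ / d * (K * lp)) ^ 2) := Real.sqrt_le_sqrt h1
        _ = Real.sqrt r * (μ / d * (K * lp)) := by
            rw [Real.sqrt_mul (by positivity), Real.sqrt_sq (by positivity)]
    have hB0 : 0 ≤ Real.sqrt r * (μ / d * (K * lp)) :=
      mul_nonneg (Real.sqrt_nonneg _) (mul_nonneg hμd (by positivity))
    calc |∑ b, lift U kl b * y b|
        ≤ Real.sqrt (∑ b, lift U kl b ^ 2) * Real.sqrt (∑ a, y a ^ 2) := cs_abs' _ _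
      _ ≤ (Real.sqrt r * (μ / d * (K * lp)))
            * (norm2 (fun l => lift U (i, j) l) / (lp / 2) ^ 2) :=
          mul_le_mul hrow_bd hny_le hny0 hB0
      _ = 4 * K * (μ * Real.sqrt r / d) * lp⁻¹ * norm2 (fun l => lift U (i, j) l) := by
          field_simp
          ring
  exact ⟨hgoal1, hgoal2⟩

end TC
end
end

section
/- Let T ∈ ℝ^{d×d×d} be an order-3 tensor admitting a decomposition T = Σ_{i=1}^r u_i ⊗ v_i ⊗ w_i with u_i, v_i, w_i ∈ ℝ^d. Then for every index subset Ω ⊆ [d]³ and every t ∈ ℝ, ‖𝒫_Ω(T) − t·T‖ ≤ ‖𝒫_Ω(𝟙^{⊗3}) − t·𝟙^{⊗3}‖ · Σ_{i=1}^r ‖u_i‖_∞ ‖v_i‖_∞ ‖w_i‖_∞, where 𝟙 ∈ ℝ^d is the all-one vector. -/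
noncomputable section

open MeasureTheory ProbabilityTheory Matrix

namespace TC

/-- The index type over which `tSpec` takes a supremum. -/
abbrev UnitTriple (d : ℕ) := { v : (Fin d → ℝ) × (Fin d → ℝ) × (Fin d → ℝ) //
      norm2 v.1 = 1 ∧ norm2 v.2.1 = 1 ∧ norm2 v.2.2 = 1 }

lemma sum_sq_eq_one_of_norm2 {d : ℕ} {x : Fin d → ℝ} (h : norm2 x = 1) :
    ∑ i, x i ^ 2 = 1 := by
  have h0 : (0:ℝ) ≤ ∑ i, x i ^ 2 := Finset.sum_nonneg fun i _ => sq_nonneg _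
  have := Real.sq_sqrt h0
  rw [show Real.sqrt (∑ i, x i ^ 2) = norm2 x from rfl, h] at this
  simpa using this.symm

lemma abs_le_one_of_sum_sq {d : ℕ} {x : Fin d → ℝ} (h : ∑ i, x i ^ 2 ≤ 1) (i : Fin d) :
    |x i| ≤ 1 := by
  have h1 : x i ^ 2 ≤ 1 :=
    le_trans (Finset.single_le_sum (fun j _ => sq_nonneg (x j)) (Finset.mem_univ i)) h
  calc |x i| = Real.sqrt (x i ^ 2) := (Real.sqrt_sq_eq_abs _).symm
    _ ≤ Real.sqrt 1 := Real.sqrt_le_sqrt h1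
    _ = 1 := Real.sqrt_one

lemma tSpec_bdd {d : ℕ} (M : Idx d → ℝ) (v : UnitTriple d) :
    ∑ t : Idx d, M t * v.1.1 t.1 * v.1.2.1 t.2.1 * v.1.2.2 t.2.2 ≤ ∑ t : Idx d, |M t| := by
  obtain ⟨⟨x, y, z⟩, hx, hy, hz⟩ := v
  have hx' := sum_sq_eq_one_of_norm2 hx
  have hy' := sum_sq_eq_one_of_norm2 hy
  have hz' := sum_sq_eq_one_of_norm2 hz
  refine Finset.sum_le_sum fun t _ => ?_
  calc M t * x t.1 * y t.2.1 * z t.2.2 ≤ |M t * x t.1 * y t.2.1 * z t.2.2| := le_abs_self _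
    _ = |M t| * |x t.1| * |y t.2.1| * |z t.2.2| := by rw [abs_mul, abs_mul, abs_mul]
    _ = |M t| * (|x t.1| * |y t.2.1| * |z t.2.2|) := by ring
    _ ≤ |M t| * 1 := by
        have h1 := abs_le_one_of_sum_sq hx'.le t.1
        have h2 := abs_le_one_of_sum_sq hy'.le t.2.1
        have h3 := abs_le_one_of_sum_sq hz'.le t.2.2
        refine mul_le_mul_of_nonneg_left ?_ (abs_nonneg _)
        exact mul_le_one₀ (mul_le_one₀ h1 (abs_nonneg _) h2) (abs_nonneg _) h3
    _ = |M t| := mul_one _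

lemma tSpec_bddAbove {d : ℕ} (M : Idx d → ℝ) :
    BddAbove (Set.range fun v : UnitTriple d =>
      ∑ t : Idx d, M t * v.1.1 t.1 * v.1.2.1 t.2.1 * v.1.2.2 t.2.2) := by
  refine ⟨∑ t : Idx d, |M t|, ?_⟩
  rintro _ ⟨v, rfl⟩
  exact tSpec_bdd M v

lemma le_tSpec {d : ℕ} (M : Idx d → ℝ) (v : UnitTriple d) :
    ∑ t : Idx d, M t * v.1.1 t.1 * v.1.2.1 t.2.1 * v.1.2.2 t.2.2 ≤ tSpec M :=
  le_ciSup (tSpec_bddAbove M) v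

/-- A standard basis vector, giving a canonical unit vector when `0 < d`. -/
def e0 (d : ℕ) (hd : 0 < d) : Fin d → ℝ := fun i => if i = ⟨0, hd⟩ then 1 else 0

lemma e0_norm {d : ℕ} (hd : 0 < d) : norm2 (e0 d hd) = 1 := by
  unfold norm2 e0
  rw [Finset.sum_eq_single ⟨0, hd⟩]
  · simp
  · intro b _ hb; simp [hb]
  · simp

lemma neg_norm2 {d : ℕ} (x : Fin d → ℝ) : norm2 (fun i => -x i) = norm2 x := by
  unfold norm2; congr 1; refine Finset.sum_congr rfl fun i _ => by ring

lemma unitTriple_nonempty {d : ℕ} (hd : 0 < d) : Nonempty (UnitTriple d) :=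
  ⟨⟨(e0 d hd, e0 d hd, e0 d hd), e0_norm hd, e0_norm hd, e0_norm hd⟩⟩

lemma tSpec_nonneg {d : ℕ} (hd : 0 < d) (M : Idx d → ℝ) : 0 ≤ tSpec M := by
  set e := e0 d hd
  have he := e0_norm hd
  have hv : norm2 (fun i => -e i) = 1 := by rw [neg_norm2]; exact he
  have h1 := le_tSpec M ⟨(e, e, e), he, he, he⟩
  have h2 := le_tSpec M ⟨(fun i => -e i, e, e), hv, he, he⟩
  simp only at h1 h2
  have hneg : ∑ t : Idx d, M t * (fun i => -e i) t.1 * e t.2.1 * e t.2.2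
      = -∑ t : Idx d, M t * e t.1 * e t.2.1 * e t.2.2 := by
    rw [← Finset.sum_neg_distrib]
    refine Finset.sum_congr rfl fun t _ => by simp <;> ring
  rw [hneg] at h2
  linarith

lemma norm2_eq_zero {d : ℕ} {x : Fin d → ℝ} (h : norm2 x = 0) (i : Fin d) : x i = 0 := by
  have h0 : (0:ℝ) ≤ ∑ j, x j ^ 2 := Finset.sum_nonneg fun j _ => sq_nonneg _
  have hs : ∑ j, x j ^ 2 = 0 := by
    have := Real.sqrt_eq_zero h0 |>.mp h
    exact this
  have := (Finset.sum_eq_zero_iff_of_nonneg (fun j _ => sq_nonneg (x j))).mp hs i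
    (Finset.mem_univ i)
  exact pow_eq_zero_iff (n := 2) (by norm_num) |>.mp this

lemma sum_le_tSpec {d : ℕ} (hd : 0 < d) (M : Idx d → ℝ) (x y z : Fin d → ℝ)
    (hx : ∑ i, x i ^ 2 ≤ 1) (hy : ∑ i, y i ^ 2 ≤ 1) (hz : ∑ i, z i ^ 2 ≤ 1) :
    ∑ t : Idx d, M t * x t.1 * y t.2.1 * z t.2.2 ≤ tSpec M := by
  have hnn := tSpec_nonneg hd M
  by_cases hx0 : norm2 x = 0
  · have : ∀ i, x i = 0 := norm2_eq_zero hx0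
    calc ∑ t : Idx d, M t * x t.1 * y t.2.1 * z t.2.2 = 0 :=
          Finset.sum_eq_zero fun t _ => by rw [this t.1]; ring
      _ ≤ tSpec M := hnn
  by_cases hy0 : norm2 y = 0
  · have : ∀ i, y i = 0 := norm2_eq_zero hy0
    calc ∑ t : Idx d, M t * x t.1 * y t.2.1 * z t.2.2 = 0 :=
          Finset.sum_eq_zero fun t _ => by rw [this t.2.1]; ring
      _ ≤ tSpec M := hnn
  by_cases hz0 : norm2 z = 0
  · have : ∀ i, z i = 0 := norm2_eq_zero hz0
    calc ∑ t : Idx d, M t * x t.1 * y t.2.1 * z t.2.2 = 0 :=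
          Finset.sum_eq_zero fun t _ => by rw [this t.2.2]; ring
      _ ≤ tSpec M := hnn
  set nx := norm2 x with hnx
  set ny := norm2 y with hny
  set nz := norm2 z with hnz
  have hxnn : 0 ≤ nx := Real.sqrt_nonneg _
  have hynn : 0 ≤ ny := Real.sqrt_nonneg _
  have hznn : 0 ≤ nz := Real.sqrt_nonneg _
  have hxpos : 0 < nx := lt_of_le_of_ne hxnn (Ne.symm hx0)
  have hypos : 0 < ny := lt_of_le_of_ne hynn (Ne.symm hy0)
  have hzpos : 0 < nz := lt_of_le_of_ne hznn (Ne.symm hz0)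
  have hxsq : nx ^ 2 = ∑ i, x i ^ 2 :=
    Real.sq_sqrt (Finset.sum_nonneg fun i _ => sq_nonneg _)
  have hysq : ny ^ 2 = ∑ i, y i ^ 2 :=
    Real.sq_sqrt (Finset.sum_nonneg fun i _ => sq_nonneg _)
  have hzsq : nz ^ 2 = ∑ i, z i ^ 2 :=
    Real.sq_sqrt (Finset.sum_nonneg fun i _ => sq_nonneg _)
  have hx1 : nx ≤ 1 := by
    rw [hnx]; unfold norm2
    calc Real.sqrt (∑ i, x i ^ 2) ≤ Real.sqrt 1 := Real.sqrt_le_sqrt hx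
      _ = 1 := Real.sqrt_one
  have hy1 : ny ≤ 1 := by
    rw [hny]; unfold norm2
    calc Real.sqrt (∑ i, y i ^ 2) ≤ Real.sqrt 1 := Real.sqrt_le_sqrt hy
      _ = 1 := Real.sqrt_one
  have hz1 : nz ≤ 1 := by
    rw [hnz]; unfold norm2
    calc Real.sqrt (∑ i, z i ^ 2) ≤ Real.sqrt 1 := Real.sqrt_le_sqrt hz
      _ = 1 := Real.sqrt_one
  have hunit : ∀ (w : Fin d → ℝ) (nw : ℝ), nw = norm2 w → 0 < nw →
      norm2 (fun i => w i / nw) = 1 := by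
    intro w nw hw hwpos
    unfold norm2
    have : ∑ i, (w i / nw) ^ 2 = (∑ i, w i ^ 2) / nw ^ 2 := by
      rw [Finset.sum_div]
      exact Finset.sum_congr rfl fun i _ => by ring
    rw [this]
    have hwsq : nw ^ 2 = ∑ i, w i ^ 2 := by
      rw [hw]; exact Real.sq_sqrt (Finset.sum_nonneg fun i _ => sq_nonneg _)
    rw [← hwsq, div_self (by positivity), Real.sqrt_one]
  have hvx : norm2 (fun i => x i / nx) = 1 := hunit x nx hnx hxpos
  have hvy : norm2 (fun i => y i / ny) = 1 := hunit y ny hny hypos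
  have hvz : norm2 (fun i => z i / nz) = 1 := hunit z nz hnz hzpos
  have key := le_tSpec M ⟨(fun i => x i / nx, fun i => y i / ny, fun i => z i / nz),
    hvx, hvy, hvz⟩
  simp only at key
  have heq : ∑ t : Idx d, M t * (x t.1 / nx) * (y t.2.1 / ny) * (z t.2.2 / nz)
      = (∑ t : Idx d, M t * x t.1 * y t.2.1 * z t.2.2) / (nx * ny * nz) := by
    rw [Finset.sum_div]
    exact Finset.sum_congr rfl fun t _ => by field_simp <;> ring
  rw [heq] at key
  have hprodpos : 0 < nx * ny * nz := by positivity
  have hprod1 : nx * ny * nz ≤ 1 := mul_le_one₀ (mul_le_one₀ hx1 hynn hy1) hznn hz1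
  have := (div_le_iff₀ hprodpos).mp key
  calc ∑ t : Idx d, M t * x t.1 * y t.2.1 * z t.2.2
      ≤ tSpec M * (nx * ny * nz) := this
    _ ≤ tSpec M * 1 := mul_le_mul_of_nonneg_left hprod1 hnn
    _ = tSpec M := mul_one _

lemma abs_le_normInf {d : ℕ} (u : Fin d → ℝ) (i : Fin d) : |u i| ≤ normInf u := by
  unfold normInf
  exact le_ciSup (f := fun j => |u j|) (Set.Finite.bddAbove (Set.finite_range _)) i

lemma normInf_nonneg {d : ℕ} (hd : 0 < d) (u : Fin d → ℝ) : 0 ≤ normInf u :=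
  le_trans (abs_nonneg _) (abs_le_normInf u ⟨0, hd⟩)

lemma term_bound {d : ℕ} (hd : 0 < d) (M : Idx d → ℝ) (x y z uu vv ww : Fin d → ℝ)
    (hx : ∑ i, x i ^ 2 ≤ 1) (hy : ∑ i, y i ^ 2 ≤ 1) (hz : ∑ i, z i ^ 2 ≤ 1) :
    ∑ t : Idx d, M t * (uu t.1 * x t.1) * (vv t.2.1 * y t.2.1) * (ww t.2.2 * z t.2.2)
      ≤ tSpec M * (normInf uu * normInf vv * normInf ww) := by
  have hnn := tSpec_nonneg hd M
  set a := normInf uu with ha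
  set b := normInf vv with hb
  set cc := normInf ww with hc
  have hann : 0 ≤ a := normInf_nonneg hd uu
  have hbnn : 0 ≤ b := normInf_nonneg hd vv
  have hcnn : 0 ≤ cc := normInf_nonneg hd ww
  by_cases ha0 : a = 0
  · have hu0 : ∀ i, uu i = 0 := fun i => abs_eq_zero.mp
      (le_antisymm (ha0 ▸ abs_le_normInf uu i) (abs_nonneg _))
    calc ∑ t : Idx d, M t * (uu t.1 * x t.1) * (vv t.2.1 * y t.2.1) * (ww t.2.2 * z t.2.2)
        = 0 := Finset.sum_eq_zero fun t _ => by rw [hu0 t.1]; ring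
      _ ≤ tSpec M * (a * b * cc) := by positivity
  by_cases hb0 : b = 0
  · have hv0 : ∀ i, vv i = 0 := fun i => abs_eq_zero.mp
      (le_antisymm (hb0 ▸ abs_le_normInf vv i) (abs_nonneg _))
    calc ∑ t : Idx d, M t * (uu t.1 * x t.1) * (vv t.2.1 * y t.2.1) * (ww t.2.2 * z t.2.2)
        = 0 := Finset.sum_eq_zero fun t _ => by rw [hv0 t.2.1]; ring
      _ ≤ tSpec M * (a * b * cc) := by positivity
  by_cases hc0 : cc = 0
  · have hw0 : ∀ i, ww i = 0 := fun i => abs_eq_zero.mp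
      (le_antisymm (hc0 ▸ abs_le_normInf ww i) (abs_nonneg _))
    calc ∑ t : Idx d, M t * (uu t.1 * x t.1) * (vv t.2.1 * y t.2.1) * (ww t.2.2 * z t.2.2)
        = 0 := Finset.sum_eq_zero fun t _ => by rw [hw0 t.2.2]; ring
      _ ≤ tSpec M * (a * b * cc) := by positivity
  have hapos : 0 < a := lt_of_le_of_ne hann (Ne.symm ha0)
  have hbpos : 0 < b := lt_of_le_of_ne hbnn (Ne.symm hb0)
  have hcpos : 0 < cc := lt_of_le_of_ne hcnn (Ne.symm hc0)
  have hscale : ∀ (f g : Fin d → ℝ) (n : ℝ), 0 < n → (∀ i, |f i| ≤ n) →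
      (∑ i, g i ^ 2 ≤ 1) → ∑ i, (f i * g i / n) ^ 2 ≤ 1 := by
    intro f g n hn hf hg
    calc ∑ i, (f i * g i / n) ^ 2 ≤ ∑ i, g i ^ 2 := by
          refine Finset.sum_le_sum fun i _ => ?_
          have h1 : |f i / n| ≤ 1 := by
            rw [abs_div, abs_of_pos hn, div_le_one hn]; exact hf i
          have h2 : (f i / n) ^ 2 ≤ 1 := by
            have := sq_abs (f i / n)
            nlinarith [abs_nonneg (f i / n)]
          calc (f i * g i / n) ^ 2 = (f i / n) ^ 2 * g i ^ 2 := by ring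
            _ ≤ 1 * g i ^ 2 := by nlinarith [sq_nonneg (g i)]
            _ = g i ^ 2 := one_mul _
      _ ≤ 1 := hg
  have hX : ∑ i, (uu i * x i / a) ^ 2 ≤ 1 :=
    hscale uu x a hapos (fun i => abs_le_normInf uu i) hx
  have hY : ∑ i, (vv i * y i / b) ^ 2 ≤ 1 :=
    hscale vv y b hbpos (fun i => abs_le_normInf vv i) hy
  have hZ : ∑ i, (ww i * z i / cc) ^ 2 ≤ 1 :=
    hscale ww z cc hcpos (fun i => abs_le_normInf ww i) hz
  have key := sum_le_tSpec hd M (fun i => uu i * x i / a) (fun i => vv i * y i / b)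
    (fun i => ww i * z i / cc) hX hY hZ
  have heq : ∑ t : Idx d, M t * (uu t.1 * x t.1 / a) * (vv t.2.1 * y t.2.1 / b) *
        (ww t.2.2 * z t.2.2 / cc)
      = (∑ t : Idx d, M t * (uu t.1 * x t.1) * (vv t.2.1 * y t.2.1) *
          (ww t.2.2 * z t.2.2)) / (a * b * cc) := by
    rw [Finset.sum_div]
    exact Finset.sum_congr rfl fun t _ => by field_simp <;> ring
  rw [heq] at key
  have := (div_le_iff₀ (by positivity : (0:ℝ) < a * b * cc)).mp key
  linarith

/-- tensor spectral-norm bound for masked low-rank tensors. -/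
theorem statement16 {d r : ℕ} (u v w : Fin r → Fin d → ℝ) (T : Idx d → ℝ)
    (hT : ∀ t : Idx d, T t = ∑ i : Fin r, u i t.1 * v i t.2.1 * w i t.2.2)
    (S : Finset (Idx d)) (c : ℝ) :
    tSpec (fun t => (if t ∈ S then T t else 0) - c * T t) ≤
      tSpec (fun t => (if t ∈ S then (1 : ℝ) else 0) - c) *
        ∑ i : Fin r, normInf (u i) * normInf (v i) * normInf (w i) := by
  classical
  set M : Idx d → ℝ := fun t => (if t ∈ S then (1 : ℝ) else 0) - c with hMdef
  have hre : (fun t : Idx d => (if t ∈ S then T t else 0) - c * T t) = fun t => M t * T t := by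
    funext t
    by_cases h : t ∈ S <;> simp [hMdef, h] <;> ring
  rw [hre]
  rcases Nat.eq_zero_or_pos d with hd | hd
  · subst hd
    have hE : IsEmpty (UnitTriple 0) := by
      refine ⟨fun v => ?_⟩
      have h1 := v.2.1
      simp [norm2] at h1
    have hL : tSpec (fun t : Idx 0 => M t * T t) = 0 := by
      unfold tSpec
      exact Real.iSup_of_isEmpty _
    have hR : tSpec M = 0 := by
      unfold tSpec
      exact Real.iSup_of_isEmpty _
    rw [hL, hR, zero_mul]
  · have hnn := tSpec_nonneg hd M
    rcases unitTriple_nonempty (d := d) hd with ⟨v0⟩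
    haveI : Nonempty (UnitTriple d) := ⟨v0⟩
    unfold tSpec
    refine ciSup_le fun vv => ?_
    obtain ⟨⟨x, y, z⟩, hx, hy, hz⟩ := vv
    simp only
    have hx' := sum_sq_eq_one_of_norm2 hx
    have hy' := sum_sq_eq_one_of_norm2 hy
    have hz' := sum_sq_eq_one_of_norm2 hz
    have hexp : ∑ t : Idx d, M t * T t * x t.1 * y t.2.1 * z t.2.2
        = ∑ i : Fin r, ∑ t : Idx d,
            M t * (u i t.1 * x t.1) * (v i t.2.1 * y t.2.1) * (w i t.2.2 * z t.2.2) := by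
      rw [Finset.sum_comm]
      refine Finset.sum_congr rfl fun t _ => ?_
      rw [hT t, Finset.mul_sum, Finset.sum_mul, Finset.sum_mul, Finset.sum_mul]
      refine Finset.sum_congr rfl fun i _ => by ring
    rw [hexp]
    calc ∑ i : Fin r, ∑ t : Idx d,
            M t * (u i t.1 * x t.1) * (v i t.2.1 * y t.2.1) * (w i t.2.2 * z t.2.2)
        ≤ ∑ i : Fin r, tSpec M * (normInf (u i) * normInf (v i) * normInf (w i)) :=
          Finset.sum_le_sum fun i _ =>
            term_bound hd M x y z (u i) (v i) (w i) hx'.le hy'.le hz'.le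
      _ = tSpec M * ∑ i : Fin r, normInf (u i) * normInf (v i) * normInf (w i) := by
          rw [Finset.mul_sum]

end TC
end
end

section
/- Let U = [u₁,…,u_r] and V = [v₁,…,v_r] be d×r real matrices, and let Ũ, Ṽ ∈ ℝ^{d²×r} be the lifted matrices whose l-th columns are u_l ⊗ u_l and v_l ⊗ v_l respectively (entries Ũ_{(i−1)d+j, l} = u_{l,i} u_{l,j}). Then: (a) ‖Ũ − Ṽ‖_F² ≤ 2·max_{1≤s≤r}(‖u_s‖₂² + ‖v_s‖₂²)·‖U − V‖_F²; and (b) for every 1 ≤ i, j ≤ d, Σ_{s=1}^r (u_{s,i} u_{s,j} − v_{s,i} v_{s,j})² ≤ 2·(max_{1≤s≤r}‖u_s‖_∞² + max_{1≤s≤r}‖v_s‖_∞²)·‖U − V‖_{2,∞}²; in particular ‖Ũ − Ṽ‖_{2,∞}² ≤ 2·(max_s‖u_s‖_∞² + max_s‖v_s‖_∞²)·‖U − V‖_{2,∞}². -/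
noncomputable section

open MeasureTheory ProbabilityTheory Matrix

namespace TC

private lemma bddR {α : Type*} [Fintype α] (f : α → ℝ) : BddAbove (Set.range f) :=
  (Set.finite_range f).bddAbove

private lemma dsum {d : ℕ} (u v : Fin d → ℝ) :
    (∑ i, ∑ j, 2 * (u j) ^ 2 * (v i) ^ 2) =
      2 * (∑ j, (u j) ^ 2) * (∑ i, (v i) ^ 2) := by
  have : ∀ i : Fin d, (∑ j, 2 * (u j) ^ 2 * (v i) ^ 2) =
      (2 * ∑ j, (u j) ^ 2) * (v i) ^ 2 := by
    intro i
    rw [← Finset.sum_mul, Finset.mul_sum]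
  rw [Finset.sum_congr rfl fun i _ => this i, ← Finset.mul_sum]

private lemma sum3 {d : ℕ} (b c x : Fin d → ℝ) :
    ∑ i, ∑ j, (2 * (b j) ^ 2 * (x i) ^ 2 + 2 * (c i) ^ 2 * (x j) ^ 2) =
      2 * ((∑ i, (b i) ^ 2) + ∑ i, (c i) ^ 2) * ∑ i, (x i) ^ 2 := by
  simp only [Finset.sum_add_distrib]
  rw [Finset.sum_comm (f := fun i j => 2 * (c i) ^ 2 * (x j) ^ 2)]
  rw [dsum b x, dsum c x]
  ring

/-- Frobenius and `2,∞` bounds for the difference of lifted matrices. -/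
theorem statement18 {d r : ℕ} (U V : Matrix (Fin d) (Fin r) ℝ) :
    ((∑ ij : Fin d × Fin d, ∑ s : Fin r, (lift U ij s - lift V ij s) ^ 2) ≤
        2 * (⨆ s : Fin r, ((∑ i, U i s ^ 2) + ∑ i, V i s ^ 2)) *
          ∑ i, ∑ s, (U i s - V i s) ^ 2) ∧
    (∀ i j : Fin d,
      (∑ s : Fin r, (U i s * U j s - V i s * V j s) ^ 2) ≤
        2 * ((⨆ s : Fin r, normInf (colU U s) ^ 2) +
              ⨆ s : Fin r, normInf (colU V s) ^ 2) *
          ⨆ i' : Fin d, ∑ s, (U i' s - V i' s) ^ 2) ∧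
    (⨆ ij : Fin d × Fin d, ∑ s : Fin r, (lift U ij s - lift V ij s) ^ 2) ≤
      2 * ((⨆ s : Fin r, normInf (colU U s) ^ 2) +
            ⨆ s : Fin r, normInf (colU V s) ^ 2) *
        ⨆ i' : Fin d, ∑ s, (U i' s - V i' s) ^ 2 := by
  set A := ⨆ s : Fin r, normInf (colU U s) ^ 2 with hAdef
  set B := ⨆ s : Fin r, normInf (colU V s) ^ 2 with hBdef
  set Δ := ⨆ i' : Fin d, ∑ s, (U i' s - V i' s) ^ 2 with hDdef
  have hA0 : 0 ≤ A := by
    rcases Nat.eq_zero_or_pos r with hr | hr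
    · subst hr; simp [hAdef, Real.iSup_of_isEmpty]
    · rw [hAdef]
      exact le_trans (sq_nonneg (normInf (colU U ⟨0, hr⟩)))
        (le_ciSup (bddR fun s => normInf (colU U s) ^ 2) (⟨0, hr⟩ : Fin r))
  have hB0 : 0 ≤ B := by
    rcases Nat.eq_zero_or_pos r with hr | hr
    · subst hr; simp [hBdef, Real.iSup_of_isEmpty]
    · rw [hBdef]
      exact le_trans (sq_nonneg (normInf (colU V ⟨0, hr⟩)))
        (le_ciSup (bddR fun s => normInf (colU V s) ^ 2) (⟨0, hr⟩ : Fin r))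
  have hAle : ∀ (j : Fin d) (s : Fin r), U j s ^ 2 ≤ A := by
    intro j s
    have h1 : |U j s| ≤ normInf (colU U s) := by
      unfold normInf colU; exact le_ciSup (bddR fun i => |U i s|) j
    have h2 : U j s ^ 2 ≤ normInf (colU U s) ^ 2 := by
      rw [← sq_abs]; exact pow_le_pow_left₀ (abs_nonneg _) h1 2
    refine h2.trans ?_
    rw [hAdef]
    exact le_ciSup (bddR fun s => normInf (colU U s) ^ 2) s
  have hBle : ∀ (j : Fin d) (s : Fin r), V j s ^ 2 ≤ B := by
    intro j s
    have h1 : |V j s| ≤ normInf (colU V s) := by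
      unfold normInf colU; exact le_ciSup (bddR fun i => |V i s|) j
    have h2 : V j s ^ 2 ≤ normInf (colU V s) ^ 2 := by
      rw [← sq_abs]; exact pow_le_pow_left₀ (abs_nonneg _) h1 2
    refine h2.trans ?_
    rw [hBdef]
    exact le_ciSup (bddR fun s => normInf (colU V s) ^ 2) s
  have hDle : ∀ i : Fin d, ∑ s, (U i s - V i s) ^ 2 ≤ Δ := by
    intro i
    rw [hDdef]
    exact le_ciSup (bddR fun i' => ∑ s, (U i' s - V i' s) ^ 2) i
  have hD0 : 0 ≤ Δ := by
    rcases Nat.eq_zero_or_pos d with hd | hd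
    · subst hd; simp [hDdef, Real.iSup_of_isEmpty]
    · exact le_trans (Finset.sum_nonneg fun s _ => sq_nonneg _) (hDle ⟨0, hd⟩)
  have partb : ∀ i j : Fin d,
      (∑ s : Fin r, (U i s * U j s - V i s * V j s) ^ 2) ≤ 2 * (A + B) * Δ := by
    intro i j
    have step1 : ∑ s : Fin r, (U i s * U j s - V i s * V j s) ^ 2 ≤
        ∑ s : Fin r, (2 * A * (U i s - V i s) ^ 2 + 2 * B * (U j s - V j s) ^ 2) := by
      apply Finset.sum_le_sum
      intro s _
      nlinarith [sq_nonneg (U j s * (U i s - V i s) - V i s * (U j s - V j s)),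
        hAle j s, hBle i s, sq_nonneg (U i s - V i s), sq_nonneg (U j s - V j s)]
    refine step1.trans ?_
    rw [Finset.sum_add_distrib, ← Finset.mul_sum, ← Finset.mul_sum]
    have h1 : 2 * A * ∑ s, (U i s - V i s) ^ 2 ≤ 2 * A * Δ :=
      mul_le_mul_of_nonneg_left (hDle i) (by linarith)
    have h2 : 2 * B * ∑ s, (U j s - V j s) ^ 2 ≤ 2 * B * Δ :=
      mul_le_mul_of_nonneg_left (hDle j) (by linarith)
    nlinarith
  refine ⟨?_, partb, ?_⟩
  · -- part (a)
    set M := ⨆ s : Fin r, ((∑ i, U i s ^ 2) + ∑ i, V i s ^ 2) with hMdef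
    have hLHS : (∑ ij : Fin d × Fin d, ∑ s : Fin r, (lift U ij s - lift V ij s) ^ 2) =
        ∑ s : Fin r, ∑ i : Fin d, ∑ j : Fin d,
          (U i s * U j s - V i s * V j s) ^ 2 := by
      rw [Finset.sum_comm]
      apply Finset.sum_congr rfl
      intro s _
      rw [Fintype.sum_prod_type]
      rfl
    rw [hLHS]
    have key : ∀ s : Fin r, ∑ i : Fin d, ∑ j : Fin d,
        (U i s * U j s - V i s * V j s) ^ 2 ≤ 2 * M * ∑ i, (U i s - V i s) ^ 2 := by
      intro s
      have step1 : ∑ i : Fin d, ∑ j : Fin d, (U i s * U j s - V i s * V j s) ^ 2 ≤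
          ∑ i : Fin d, ∑ j : Fin d,
            (2 * (U j s) ^ 2 * (U i s - V i s) ^ 2 +
              2 * (V i s) ^ 2 * ((U j s - V j s)) ^ 2) := by
        apply Finset.sum_le_sum; intro i _
        apply Finset.sum_le_sum; intro j _
        nlinarith [sq_nonneg (U j s * (U i s - V i s) - V i s * (U j s - V j s))]
      refine step1.trans ?_
      rw [sum3 (fun j => U j s) (fun i => V i s) (fun i => U i s - V i s)]
      have hM : ((∑ i, U i s ^ 2) + ∑ i, V i s ^ 2) ≤ M := by
        rw [hMdef]
        exact le_ciSup (bddR fun s => ((∑ i, U i s ^ 2) + ∑ i, V i s ^ 2)) s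
      have hnn : 0 ≤ ∑ i, (U i s - V i s) ^ 2 :=
        Finset.sum_nonneg fun _ _ => sq_nonneg _
      calc 2 * ((∑ i, U i s ^ 2) + ∑ i, V i s ^ 2) * ∑ i, (U i s - V i s) ^ 2
          ≤ 2 * M * ∑ i, (U i s - V i s) ^ 2 := by nlinarith
        _ = 2 * M * ∑ i, (U i s - V i s) ^ 2 := rfl
    calc ∑ s : Fin r, ∑ i : Fin d, ∑ j : Fin d, (U i s * U j s - V i s * V j s) ^ 2
        ≤ ∑ s : Fin r, 2 * M * ∑ i, (U i s - V i s) ^ 2 :=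
          Finset.sum_le_sum fun s _ => key s
      _ = 2 * M * ∑ i, ∑ s, (U i s - V i s) ^ 2 := by
          rw [← Finset.mul_sum, Finset.sum_comm]
  · -- part (c)
    rcases isEmpty_or_nonempty (Fin d × Fin d) with he | hne
    · rw [Real.iSup_of_isEmpty]
      positivity
    · apply ciSup_le
      intro ij
      have := partb ij.1 ij.2
      simpa [lift] using this

end TC
end
end
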